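/- arXiv:1909.12645 — 13 statements merged into one kernel-verified Lean document; each statement's English description precedes it below -/
import Mathlib

section
/- If a positive integer x is of the form 4^r(8k+7) for nonnegative integers r and k, then none of x-2, x-6, x+2, x+6 is of that form (i.e., each of them, if positive, can be written as a sum of three integer squares). -/
lemma form_mod8 (r k : ℕ) :
    ((4:ℤ) ^ r * (8 * k + 7)) % 8 = 0 ∨
    ((4:ℤ) ^ r * (8 * k + 7)) % 8 = 4 ∨
    ((4:ℤ) ^ r * (8 * k + 7)) % 8 = 7 := by
  match r with
  | 0 => right; right; simp
  | 1 =>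
    right; left
    have : (4:ℤ) ^ 1 * (8 * k + 7) = 8 * (4 * k + 3) + 4 := by push_cast; ring
    omega
  | n + 2 =>
    left
    have : (8:ℤ) ∣ 4 ^ (n + 2) * (8 * k + 7) :=
      ⟨2 * 4 ^ n * (8 * k + 7), by ring⟩
    omega

theorem bad_form_shifts (x : ℤ) (hx : 0 < x)
    (h : ∃ r k : ℕ, x = 4 ^ r * (8 * k + 7)) :
    (¬ ∃ r k : ℕ, x - 2 = 4 ^ r * (8 * k + 7)) ∧
    (¬ ∃ r k : ℕ, x - 6 = 4 ^ r * (8 * k + 7)) ∧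
    (¬ ∃ r k : ℕ, x + 2 = 4 ^ r * (8 * k + 7)) ∧
    (¬ ∃ r k : ℕ, x + 6 = 4 ^ r * (8 * k + 7)) := by
  obtain ⟨r, k, rfl⟩ := h
  have hx8 := form_mod8 r k
  refine ⟨?_, ?_, ?_, ?_⟩ <;>
  · rintro ⟨s, m, he⟩
    have hy8 := form_mod8 s m
    rw [← he] at hy8
    omega
end

section
/- Let A be an n×n integer matrix that is entrywise nonnegative, positive semidefinite, and of rank 1, and let d be the greatest common divisor of its diagonal entries. Then d divides every entry of A. -/
open Matrix

lemma rank_submatrix_le_general {k l m n : ℕ} (M : Matrix (Fin m) (Fin n) ℝ)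
    (f : Fin k → Fin m) (g : Fin l → Fin n) :
    (M.submatrix f g).rank ≤ M.rank := by
  have h : M.submatrix f g =
      (1 : Matrix (Fin m) (Fin m) ℝ).submatrix f id * M *
        (1 : Matrix (Fin n) (Fin n) ℝ).submatrix id g := by
    ext a b
    simp [Matrix.mul_apply, Matrix.one_apply, Finset.sum_ite_eq, Finset.sum_ite_eq']
  rw [h]
  exact (Matrix.rank_mul_le_left _ _).trans (Matrix.rank_mul_le_right _ _)

lemma det_eq_zero_of_rank_le_one (M : Matrix (Fin 2) (Fin 2) ℝ) (h : M.rank ≤ 1) :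
    M.det = 0 := by
  by_contra hd
  have hu : IsUnit M := (Matrix.isUnit_iff_isUnit_det M).mpr (isUnit_iff_ne_zero.mpr hd)
  have := Matrix.rank_of_isUnit M hu
  simp [this] at h

theorem gcd_diag_dvd_entries (n : ℕ) (A : Matrix (Fin n) (Fin n) ℤ)
    (hnn : ∀ i j, 0 ≤ A i j)
    (hpsd : Matrix.PosSemidef (A.map ((↑) : ℤ → ℝ)))
    (hrk : Matrix.rank (A.map ((↑) : ℤ → ℝ)) = 1) :
    ∀ i j, (Finset.univ.gcd fun i => A i i) ∣ A i j := by
  intro i j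
  set d := Finset.univ.gcd fun i => A i i with hd
  -- symmetry
  have hsym : A j i = A i j := by
    have := hpsd.isHermitian
    have h2 : ((A j i : ℝ)) = (A i j : ℝ) := by
      have := congrFun (congrFun this.symm i) j
      simpa [Matrix.conjTranspose_apply, Matrix.map_apply] using this.symm
    exact_mod_cast h2
  -- 2x2 submatrix has det 0
  have hr2 : ((A.map ((↑) : ℤ → ℝ)).submatrix ![i, j] ![i, j]).rank ≤ 1 := by
    rw [← hrk]; exact rank_submatrix_le_general _ _ _
  have hdet := det_eq_zero_of_rank_le_one _ hr2
  rw [Matrix.det_fin_two] at hdet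
  simp only [Matrix.submatrix_apply, Matrix.map_apply, Matrix.cons_val_zero,
    Matrix.cons_val_one, Matrix.head_cons] at hdet
  have hdetZ : A i i * A j j - A i j * A j i = 0 := by
    have : ((A i i * A j j - A i j * A j i : ℤ) : ℝ) = 0 := by push_cast; linarith
    exact_mod_cast this
  have key : A i j ^ 2 = A i i * A j j := by rw [hsym] at hdetZ; ring_nf; ring_nf at hdetZ; linarith
  have h1 : d ∣ A i i := Finset.gcd_dvd (Finset.mem_univ i)
  have h2 : d ∣ A j j := Finset.gcd_dvd (Finset.mem_univ j)
  have hsq : d ^ 2 ∣ A i j ^ 2 := by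
    rw [key, sq]
    exact mul_dvd_mul h1 h2
  exact (Int.pow_dvd_pow_iff two_ne_zero).mp hsq
end

section
/- Let B be an n×n integer matrix that is entrywise nonnegative, positive semidefinite, of rank 1, and such that the gcd of its diagonal entries equals 1. Then every diagonal entry of B is a perfect square. -/
theorem sq_of_even_fact (n : ℕ) (h : ∀ p, Even (n.factorization p)) (hn : n ≠ 0) :
    ∃ m, n = m ^ 2 := by
  refine ⟨n.factorization.prod fun p k => p ^ (k / 2), ?_⟩
  have key : ∀ p ∈ n.factorization.support,
      (p ^ (n.factorization p / 2)) ^ 2 = p ^ n.factorization p := by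
    intro p _
    rw [← pow_mul]
    congr 1
    obtain ⟨r, hr⟩ := h p
    omega
  conv_lhs => rw [← Nat.factorization_prod_pow_eq_self hn]
  rw [Finsupp.prod, Finsupp.prod, ← Finset.prod_pow]
  exact Finset.prod_congr rfl fun p hp => (key p hp).symm

theorem rank_one_decomp (N : ℕ) (A : Matrix (Fin N) (Fin N) ℝ) (h : A.rank = 1) :
    ∃ v w : Fin N → ℝ, ∀ i j, A i j = v i * w j := by
  rw [Matrix.rank] at h
  obtain ⟨⟨u, hu⟩, -, hspan⟩ := finrank_eq_one_iff'.mp h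
  choose c hc using fun j => hspan ⟨A.mulVecLin (Pi.single j 1), LinearMap.mem_range_self _ _⟩
  refine ⟨u, c, fun i j => ?_⟩
  have h2 := congrArg (fun x => (x : Fin N → ℝ) i) (congrArg Subtype.val (hc j))
  simp [Matrix.mulVecLin, Matrix.mulVec, dotProduct, Pi.single_apply, mul_comm] at h2
  rw [← h2]

theorem diag_perfect_square (n : ℕ) (B : Matrix (Fin n) (Fin n) ℤ)
    (hnn : ∀ i j, 0 ≤ B i j)
    (hpsd : Matrix.PosSemidef (B.map ((↑) : ℤ → ℝ)))
    (hrk : Matrix.rank (B.map ((↑) : ℤ → ℝ)) = 1)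
    (hgcd : (Finset.univ.gcd fun i => B i i) = 1) :
    ∀ i, ∃ m : ℤ, B i i = m ^ 2 := by
  obtain ⟨v, w, hvw⟩ := rank_one_decomp n _ hrk
  have hsym : ∀ i j, B i j = B j i := by
    intro i j
    have := congrFun (congrFun hpsd.1 i) j
    simp only [Matrix.conjTranspose_apply, Matrix.map_apply, star_trivial] at this
    exact_mod_cast this.symm
  have key : ∀ i j, B i i * B j j = B i j ^ 2 := by
    intro i j
    have hr : (B i i : ℝ) * (B j j : ℝ) = (B i j : ℝ) * (B j i : ℝ) := by
      have h1 := hvw i i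
      have h2 := hvw j j
      have h3 := hvw i j
      have h4 := hvw j i
      simp only [Matrix.map_apply] at h1 h2 h3 h4
      rw [h1, h2, h3, h4]; ring
    have : (B i i : ℝ) * (B j j : ℝ) = ((B i j : ℝ)) ^ 2 := by
      rw [hr, ← hsym i j]; ring
    exact_mod_cast this
  set a : Fin n → ℕ := fun i => (B i i).natAbs with ha
  have hsqn : ∀ i j, a i * a j = (B i j).natAbs ^ 2 := by
    intro i j
    have := congrArg Int.natAbs (key i j)
    rwa [Int.natAbs_mul, Int.natAbs_pow] at this
  have hprime : ∀ p : ℕ, p.Prime → ∃ j, ¬ p ∣ a j := by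
    intro p hp
    by_contra hc
    push_neg at hc
    have hdvd : (p : ℤ) ∣ Finset.univ.gcd fun i => B i i := by
      refine Finset.dvd_gcd fun j _ => ?_
      have := Int.natCast_dvd_natCast.2 (hc j)
      rwa [Int.natAbs_of_nonneg (hnn j j)] at this
    rw [hgcd] at hdvd
    have h1 : p ≤ 1 := by exact_mod_cast Int.le_of_dvd one_pos hdvd
    have := hp.two_le
    omega
  intro i
  by_cases h0 : B i i = 0
  · exact ⟨0, by simp [h0]⟩
  have hai : a i ≠ 0 := fun h => h0 (by simpa [ha, Int.natAbs_eq_zero] using h)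
  have heven : ∀ p, Even ((a i).factorization p) := by
    intro p
    by_cases hp : p.Prime
    · obtain ⟨j, hj⟩ := hprime p hp
      have haj : a j ≠ 0 := fun h => hj (h ▸ dvd_zero p)
      have hc0 : (B i j).natAbs ≠ 0 := by
        intro h
        have := hsqn i j
        rw [h] at this
        simp at this
        tauto
      have hfact : (a i * a j).factorization p = ((B i j).natAbs ^ 2).factorization p := by
        rw [hsqn i j]
      rw [Nat.factorization_mul hai haj, Nat.factorization_pow] at hfact
      simp only [Finsupp.coe_add, Pi.add_apply, Finsupp.smul_apply, smul_eq_mul] at hfact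
      have hzero : (a j).factorization p = 0 := Nat.factorization_eq_zero_of_not_dvd hj
      exact ⟨(B i j).natAbs.factorization p, by omega⟩
    · simp [Nat.factorization_eq_zero_of_not_prime _ hp]
  obtain ⟨m, hm⟩ := sq_of_even_fact (a i) heven hai
  refine ⟨(m : ℤ), ?_⟩
  rw [← Int.natAbs_of_nonneg (hnn i i)]
  exact_mod_cast hm
end

section
/- Let A be an n×n integer doubly nonnegative matrix of rank 1. Then A admits an integer cp-factorization A = V V^T with V an entrywise nonnegative integer matrix, and its integer cp-rank equals the integer cp-rank of the 1×1 matrix [d], where d is the gcd of the diagonal entries of A. -/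
open Matrix

lemma aux_gcd_nonneg {β : Type*} (s : Finset β) (f : β → ℤ) : 0 ≤ s.gcd f :=
  Int.nonneg_of_normalize_eq_self (Finset.normalize_gcd)

lemma aux_minor {n : ℕ} (M : Matrix (Fin n) (Fin n) ℝ) (h : M.rank = 1) :
    ∀ i j k l, M i j * M k l = M i l * M k j := by
  have h1 : Module.finrank ℝ (LinearMap.range M.mulVecLin) = 1 := h
  obtain ⟨v, -, hv⟩ := (finrank_eq_one_iff' (K := ℝ)
    (V := LinearMap.range M.mulVecLin)).mp h1
  have hcol : ∀ j, ∃ c : ℝ, ∀ i, M i j = c * (v : Fin n → ℝ) i := by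
    intro j
    have hmem : (fun i => M i j) ∈ LinearMap.range M.mulVecLin := by
      refine ⟨Pi.single j 1, ?_⟩
      simp [Matrix.mulVecLin_apply]
      rfl
    obtain ⟨c, hc⟩ := hv ⟨_, hmem⟩
    refine ⟨c, fun i => ?_⟩
    have := congrArg (fun w : LinearMap.range M.mulVecLin => (w : Fin n → ℝ) i) hc
    simpa using this.symm
  intro i j k l
  obtain ⟨cj, hj⟩ := hcol j
  obtain ⟨cl, hl⟩ := hcol l
  rw [hj i, hj k, hl i, hl k]
  ring

lemma aux_struct {n : ℕ} (A : Matrix (Fin n) (Fin n) ℤ)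
    (hnn : ∀ i j, 0 ≤ A i j) (hsymm : ∀ i j, A j i = A i j)
    (hminor : ∀ i j k l, A i j * A k l = A i l * A k j)
    (i₀ : Fin n) (h0 : A i₀ i₀ ≠ 0) :
    ∃ (d : ℤ) (b : Fin n → ℤ), 0 < d ∧ (∀ i, 0 ≤ b i) ∧ Finset.univ.gcd b = 1 ∧
      (∀ i j, A i j = d * (b i * b j)) ∧ d = Finset.univ.gcd (fun i => A i i) := by
  set D : ℤ := A i₀ i₀ with hDdef
  have hD : 0 < D := lt_of_le_of_ne (hnn i₀ i₀) (Ne.symm h0)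
  set c : Fin n → ℤ := fun i => A i i₀ with hcdef
  set g : Fin n → ℤ := fun i => Finset.univ.gcd (fun j => A i j) with hgdef
  set dall : ℤ := Finset.univ.gcd g with hdalldef
  set γ : ℤ := Finset.univ.gcd c with hγdef
  have hdall_dvd : ∀ i j, dall ∣ A i j := fun i j =>
    (Finset.gcd_dvd (Finset.mem_univ i)).trans (Finset.gcd_dvd (Finset.mem_univ j))
  have hdall_nonneg : 0 ≤ dall := aux_gcd_nonneg _ _
  have hdall_pos : 0 < dall := by
    rcases hdall_nonneg.lt_or_eq with h | h
    · exact h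
    · exact absurd (zero_dvd_iff.mp (h ▸ hdall_dvd i₀ i₀)) h0
  have hγ_nonneg : 0 ≤ γ := aux_gcd_nonneg _ _
  have hAD : ∀ i j, A i j * D = c i * c j := by
    intro i j
    have := hminor i j i₀ i₀
    rw [← hsymm i₀ j] at this
    exact this
  -- γ * γ = dall * D
  have key : γ * γ = dall * D := by
    have e1 : ∀ i : Fin n, Finset.univ.gcd (fun j => A i j * D) = g i * D := by
      intro i
      rw [Finset.gcd_mul_right, Int.normalize_of_nonneg hD.le]
    have e2 : Finset.univ.gcd (fun i => g i * D) = dall * D := by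
      rw [Finset.gcd_mul_right, Int.normalize_of_nonneg hD.le]
    have f1 : ∀ i : Fin n, Finset.univ.gcd (fun j => c i * c j) = c i * γ := by
      intro i
      rw [Finset.gcd_mul_left, Int.normalize_of_nonneg (hnn i i₀)]
    have f2 : Finset.univ.gcd (fun i => c i * γ) = γ * γ := by
      rw [Finset.gcd_mul_right, Int.normalize_of_nonneg hγ_nonneg]
    calc γ * γ = Finset.univ.gcd (fun i => c i * γ) := f2.symm
      _ = Finset.univ.gcd (fun i => Finset.univ.gcd (fun j => c i * c j)) := by
          refine Finset.gcd_congr rfl (fun i _ => (f1 i).symm)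
      _ = Finset.univ.gcd (fun i => Finset.univ.gcd (fun j => A i j * D)) := by
          refine Finset.gcd_congr rfl (fun i _ => ?_)
          exact Finset.gcd_congr rfl (fun j _ => (hAD i j).symm)
      _ = Finset.univ.gcd (fun i => g i * D) :=
          Finset.gcd_congr rfl (fun i _ => e1 i)
      _ = dall * D := e2
  have hγ_pos : 0 < γ := by
    rcases hγ_nonneg.lt_or_eq with h | h
    · exact h
    · exfalso; nlinarith [key]
  set b : Fin n → ℤ := fun i => c i / γ with hbdef
  have hcb : ∀ i, c i = γ * b i := fun i =>
    (Int.mul_ediv_cancel' (Finset.gcd_dvd (Finset.mem_univ i))).symm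
  have hb_nonneg : ∀ i, 0 ≤ b i := fun i =>
    Int.ediv_nonneg (hnn i i₀) hγ_nonneg
  have hstruct : ∀ i j, A i j = dall * (b i * b j) := by
    intro i j
    have h1 : A i j * D = (dall * (b i * b j)) * D := by
      rw [hAD i j, hcb i, hcb j]
      linear_combination (b i * b j) * key
    exact mul_right_cancel₀ hD.ne' h1
  have hgcdb : Finset.univ.gcd b = 1 := by
    have : γ = γ * Finset.univ.gcd b := by
      conv_lhs => rw [hγdef]
      calc Finset.univ.gcd c = Finset.univ.gcd (fun i => γ * b i) :=
            Finset.gcd_congr rfl (fun i _ => hcb i)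
        _ = normalize γ * Finset.univ.gcd b := Finset.gcd_mul_left
        _ = γ * Finset.univ.gcd b := by rw [Int.normalize_of_nonneg hγ_nonneg]
    have := mul_left_cancel₀ hγ_pos.ne' (this.symm.trans (mul_one γ).symm)
    omega
  have hdiag : dall = Finset.univ.gcd (fun i => A i i) := by
    refine Int.eq_of_associated_of_nonneg (associated_of_dvd_dvd ?_ ?_) hdall_nonneg
      (aux_gcd_nonneg _ _)
    · exact Finset.dvd_gcd (fun i _ => hdall_dvd i i)
    · refine Finset.dvd_gcd (fun i _ => Finset.dvd_gcd (fun j _ => ?_))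
      have hsq : (A i j) ^ 2 = A i i * A j j := by
        have := hminor i j j i
        rw [hsymm i j] at this
        rw [sq]; exact this
      have hd2 : (Finset.univ.gcd (fun i => A i i)) ^ 2 ∣ (A i j) ^ 2 := by
        rw [hsq, sq]
        exact mul_dvd_mul (Finset.gcd_dvd (Finset.mem_univ i))
          (Finset.gcd_dvd (Finset.mem_univ j))
      exact (Int.pow_dvd_pow_iff (two_ne_zero)).mp hd2
  exact ⟨dall, b, hdall_pos, hb_nonneg, hgcdb, hstruct, hdiag⟩

theorem rank_one_int_cp (n : ℕ) (A : Matrix (Fin n) (Fin n) ℤ)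
    (hnn : ∀ i j, 0 ≤ A i j)
    (hpsd : Matrix.PosSemidef (A.map ((↑) : ℤ → ℝ)))
    (hrk : Matrix.rank (A.map ((↑) : ℤ → ℝ)) = 1) :
    (∃ (m : ℕ) (V : Matrix (Fin n) (Fin m) ℤ),
        (∀ i j, 0 ≤ V i j) ∧ A = V * Vᵀ) ∧
    sInf {m : ℕ | ∃ V : Matrix (Fin n) (Fin m) ℤ,
        (∀ i j, 0 ≤ V i j) ∧ A = V * Vᵀ} =
      sInf {s : ℕ | ∃ f : Fin s → ℤ, (∀ i, 0 ≤ f i) ∧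
        (Finset.univ.gcd fun i => A i i) = ∑ i, f i ^ 2} := by
  -- symmetry of A
  have hsymm : ∀ i j, A j i = A i j := by
    intro i j
    have h := hpsd.1.apply i j
    simp only [Matrix.map_apply, RCLike.star_def, starRingEnd_apply, star_trivial] at h
    exact_mod_cast h
  -- minors vanish
  have hminorR := aux_minor _ hrk
  have hminor : ∀ i j k l, A i j * A k l = A i l * A k j := by
    intro i j k l
    have := hminorR i j k l
    simp only [Matrix.map_apply] at this
    exact_mod_cast this
  -- a nonzero diagonal entry
  have hA0 : ∃ i, A i i ≠ 0 := by
    by_contra h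
    push_neg at h
    have hz : A = 0 := by
      ext i j
      have h2 : A i j * A i j = A i i * A j j := by
        have := hminor i j j i
        rwa [hsymm i j] at this
      rw [h i, h j, mul_zero] at h2
      have := mul_self_eq_zero.mp h2
      simpa using this
    rw [hz] at hrk
    simp only [Matrix.map_zero, Int.cast_zero] at hrk
    rw [Matrix.rank_zero] at hrk
    exact one_ne_zero hrk.symm
  obtain ⟨i₀, h0⟩ := hA0
  obtain ⟨d, b, hd_pos, hb_nonneg, hgcdb, hstruct, hdiag⟩ :=
    aux_struct A hnn hsymm hminor i₀ h0
  -- the two sets are equal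
  have hsets : {m : ℕ | ∃ V : Matrix (Fin n) (Fin m) ℤ,
        (∀ i j, 0 ≤ V i j) ∧ A = V * Vᵀ} =
      {s : ℕ | ∃ f : Fin s → ℤ, (∀ i, 0 ≤ f i) ∧
        (Finset.univ.gcd fun i => A i i) = ∑ i, f i ^ 2} := by
    ext m
    simp only [Set.mem_setOf_eq, ← hdiag]
    constructor
    · rintro ⟨V, hVnn, hAV⟩
      have hVA : ∀ i j, A i j = ∑ k, V i k * V j k := by
        intro i j
        rw [hAV]
        simp [Matrix.mul_apply, Matrix.transpose_apply]
      -- proportionality of columns to b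
      have prop : ∀ i j k, b j * V i k = b i * V j k := by
        intro i j k
        have hS : ∑ l, (b j * V i l - b i * V j l) ^ 2 = 0 := by
          have expand : ∀ l : Fin m, (b j * V i l - b i * V j l) ^ 2 =
              b j ^ 2 * (V i l * V i l) - 2 * (b i * b j) * (V i l * V j l)
                + b i ^ 2 * (V j l * V j l) := fun l => by ring
          rw [Finset.sum_congr rfl (fun l _ => expand l), Finset.sum_add_distrib,
            Finset.sum_sub_distrib, ← Finset.mul_sum, ← Finset.mul_sum, ← Finset.mul_sum,
            ← hVA i i, ← hVA i j, ← hVA j j, hstruct i i, hstruct i j, hstruct j j]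
          ring
        have := (Finset.sum_eq_zero_iff_of_nonneg
          (fun l _ => sq_nonneg (b j * V i l - b i * V j l))).mp hS k (Finset.mem_univ k)
        have hz : b j * V i k - b i * V j k = 0 :=
          pow_eq_zero_iff (n := 2) (by norm_num) |>.mp this
        linarith [hz]
      set t : Fin m → ℤ := fun k => Finset.univ.gcd (fun i => V i k) with htdef
      have ht_nonneg : ∀ k, 0 ≤ t k := fun k => aux_gcd_nonneg _ _
      have hVt : ∀ i k, V i k = b i * t k := by
        intro i k
        calc V i k = Finset.univ.gcd (fun j => b j * V i k) := by
              rw [Finset.gcd_mul_right, hgcdb, one_mul,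
                Int.normalize_of_nonneg (hVnn i k)]
          _ = Finset.univ.gcd (fun j => b i * V j k) :=
              Finset.gcd_congr rfl (fun j _ => prop i j k)
          _ = b i * t k := by
              rw [Finset.gcd_mul_left, Int.normalize_of_nonneg (hb_nonneg i)]
      -- some b i₁ positive
      have hbne : ∃ i₁, b i₁ ≠ 0 := by
        by_contra h
        push_neg at h
        have h0' : Finset.univ.gcd b = 0 := Finset.gcd_eq_zero_iff.mpr (fun i _ => h i)
        rw [hgcdb] at h0'
        exact one_ne_zero h0'
      obtain ⟨i₁, hi₁⟩ := hbne
      refine ⟨t, ht_nonneg, ?_⟩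
      have h1 : d * (b i₁ * b i₁) = ∑ k, (b i₁ * t k) * (b i₁ * t k) := by
        rw [← hstruct i₁ i₁, hVA i₁ i₁]
        exact Finset.sum_congr rfl (fun k _ => by rw [hVt i₁ k])
      have h2 : d * (b i₁ * b i₁) = (b i₁ * b i₁) * ∑ k, t k ^ 2 := by
        rw [h1, Finset.mul_sum]
        exact Finset.sum_congr rfl (fun k _ => by ring)
      have hb2 : b i₁ * b i₁ ≠ 0 := mul_ne_zero hi₁ hi₁
      have := mul_left_cancel₀ hb2 ((mul_comm d _ ▸ h2))
      linarith [this]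
    · rintro ⟨f, hf_nonneg, hfs⟩
      refine ⟨Matrix.of (fun i k => b i * f k), fun i k => mul_nonneg (hb_nonneg i) (hf_nonneg k), ?_⟩
      ext i j
      simp only [Matrix.mul_apply, Matrix.transpose_apply, Matrix.of_apply]
      rw [hstruct i j, hfs, Finset.sum_mul]
      exact Finset.sum_congr rfl (fun k _ => by ring)
  constructor
  · -- existence via sum of four squares
    obtain ⟨a1, a2, a3, a4, hsq⟩ := Nat.sum_four_squares d.toNat
    have hmem : (4 : ℕ) ∈ {s : ℕ | ∃ f : Fin s → ℤ, (∀ i, 0 ≤ f i) ∧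
        (Finset.univ.gcd fun i => A i i) = ∑ i, f i ^ 2} := by
      refine ⟨![(a1 : ℤ), a2, a3, a4], ?_, ?_⟩
      · intro i
        fin_cases i <;> simp
      · rw [← hdiag, Fin.sum_univ_four]
        have : ((a1 : ℤ) ^ 2 + a2 ^ 2 + a3 ^ 2 + a4 ^ 2) = (d.toNat : ℤ) := by
          exact_mod_cast congrArg (Nat.cast : ℕ → ℤ) hsq
        simp only [Matrix.cons_val_zero, Matrix.cons_val_one, Matrix.head_cons]
        rw [Int.toNat_of_nonneg hd_pos.le] at this
        rw [← this]
        norm_num [Matrix.cons_val_fin_one]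
        rfl
    rw [← hsets] at hmem
    obtain ⟨V, hV⟩ := hmem
    exact ⟨4, V, hV⟩
  · rw [hsets]
end

section
/- Let A = [[a, b], [b, c]] be a 2×2 integer matrix with nonnegative entries and nonnegative determinant, with c > 0 and b > c. Write b = αc + b₀ with α ≥ 1 an integer and 0 ≤ b₀ < c. Then the matrix A₀ = S A S^T, where S = [[1, -α], [0, 1]], is again an integer matrix with nonnegative entries and nonnegative determinant, and has entries A₀ = [[a - 2αb + α²c, b - αc], [b - αc, c]]. -/
open Matrix

theorem reduction_step (a b c α b₀ : ℤ)
    (ha : 0 ≤ a) (hb : 0 ≤ b) (hc : 0 < c) (hbc : c < b)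
    (hdet : 0 ≤ a * c - b ^ 2)
    (hα : 1 ≤ α) (hb0 : b = α * c + b₀) (hb0nn : 0 ≤ b₀) (hb0lt : b₀ < c) :
    !![(1 : ℤ), -α; 0, 1] * !![a, b; b, c] * (!![(1 : ℤ), -α; 0, 1])ᵀ =
      !![a - 2 * α * b + α ^ 2 * c, b - α * c; b - α * c, c] ∧
    (0 ≤ a - 2 * α * b + α ^ 2 * c ∧ 0 ≤ b - α * c ∧ 0 ≤ c) ∧
    0 ≤ (a - 2 * α * b + α ^ 2 * c) * c - (b - α * c) ^ 2 := by
  refine ⟨?_, ⟨?_, ?_, le_of_lt hc⟩, ?_⟩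
  · have ht : (!![(1 : ℤ), -α; 0, 1])ᵀ = !![(1 : ℤ), 0; -α, 1] := by
      ext i j; fin_cases i <;> fin_cases j <;> rfl
    rw [ht, Matrix.mul_fin_two, Matrix.mul_fin_two]
    congr 1 <;> ring
  · nlinarith [sq_nonneg (b - α * c)]
  · nlinarith
  · nlinarith
end

section
/- Every 2×2 integer doubly nonnegative matrix A = [[a,b],[b,c]] with a ≥ b and c ≥ b admits an integer cp-factorization with at most 12 columns, via the decomposition A = b·[[1,1],[1,1]] + (a-b)·E₁₁ + (c-b)·E₂₂. -/
open Matrix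

set_option maxHeartbeats 1600000 in
theorem cp_twelve_ordered (a b c : ℤ)
    (hb : 0 ≤ b) (hab : b ≤ a) (hcb : b ≤ c) (hdet : b ^ 2 ≤ a * c) :
    !![a, b; b, c] =
      b • !![(1 : ℤ), 1; 1, 1] + (a - b) • !![(1 : ℤ), 0; 0, 0]
        + (c - b) • !![(0 : ℤ), 0; 0, 1] ∧
    ∃ (m : ℕ), m ≤ 12 ∧ ∃ V : Matrix (Fin 2) (Fin m) ℤ,
      (∀ i j, 0 ≤ V i j) ∧ !![a, b; b, c] = V * Vᵀ := by
  constructor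
  · ext i j
    fin_cases i <;> fin_cases j <;> simp <;> ring
  · obtain ⟨p1, p2, p3, p4, hp⟩ := Nat.sum_four_squares b.toNat
    obtain ⟨q1, q2, q3, q4, hq⟩ := Nat.sum_four_squares (a - b).toNat
    obtain ⟨r1, r2, r3, r4, hr⟩ := Nat.sum_four_squares (c - b).toNat
    have hpb : (p1:ℤ)^2 + p2^2 + p3^2 + p4^2 = b := by
      have := congrArg (Nat.cast : ℕ → ℤ) hp
      push_cast at this
      rw [this, Int.toNat_of_nonneg hb]
    have hqb : (q1:ℤ)^2 + q2^2 + q3^2 + q4^2 = a - b := by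
      have := congrArg (Nat.cast : ℕ → ℤ) hq
      push_cast at this
      rw [this, Int.toNat_of_nonneg (by omega)]
    have hrb : (r1:ℤ)^2 + r2^2 + r3^2 + r4^2 = c - b := by
      have := congrArg (Nat.cast : ℕ → ℤ) hr
      push_cast at this
      rw [this, Int.toNat_of_nonneg (by omega)]
    set W : Matrix (Fin 2) (Fin 12) ℕ :=
      !![p1, p2, p3, p4, q1, q2, q3, q4, 0, 0, 0, 0;
         p1, p2, p3, p4, 0, 0, 0, 0, r1, r2, r3, r4] with hW
    refine ⟨12, le_refl _, Matrix.of fun i j => (W i j : ℤ), fun i j => Int.natCast_nonneg _, ?_⟩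
    ext i j
    fin_cases i <;> fin_cases j <;>
      simp [Matrix.mul_apply, Fin.sum_univ_succ, hW, Matrix.cons_val_succ] <;>
      nlinarith [hpb, hqb, hrb]
end

section
/- Every 2×2 integer doubly nonnegative matrix has an integer cp-factorization, and its integer cp-rank is at most 12. -/
open Matrix
set_option maxHeartbeats 1000000

lemma four_sq_int (n : ℤ) (hn : 0 ≤ n) :
    ∃ p q r s : ℤ, 0 ≤ p ∧ 0 ≤ q ∧ 0 ≤ r ∧ 0 ≤ s ∧ n = p ^ 2 + q ^ 2 + r ^ 2 + s ^ 2 := by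
  obtain ⟨a, b, c, d, h⟩ := Nat.sum_four_squares n.toNat
  refine ⟨a, b, c, d, by positivity, by positivity, by positivity, by positivity, ?_⟩
  have := congrArg (fun k : ℕ => (k : ℤ)) h
  push_cast at this
  rw [Int.toNat_of_nonneg hn] at this
  linarith

lemma base_case (a b c : ℤ) (hb : 0 ≤ b) (hba : b ≤ a) (hbc : b ≤ c) :
    ∃ V : Matrix (Fin 2) (Fin 12) ℤ, (∀ i j, 0 ≤ V i j) ∧ !![a, b; b, c] = V * Vᵀ := by
  obtain ⟨p1, p2, p3, p4, hp1, hp2, hp3, hp4, hp⟩ := four_sq_int b hb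
  obtain ⟨q1, q2, q3, q4, hq1, hq2, hq3, hq4, hq⟩ := four_sq_int (a - b) (by linarith)
  obtain ⟨r1, r2, r3, r4, hr1, hr2, hr3, hr4, hr⟩ := four_sq_int (c - b) (by linarith)
  refine ⟨Matrix.of ![![p1,p2,p3,p4,q1,q2,q3,q4,0,0,0,0],
                      ![p1,p2,p3,p4,0,0,0,0,r1,r2,r3,r4]], ?_, ?_⟩
  · intro i j
    fin_cases i <;> fin_cases j <;>
      first | assumption | exact le_refl 0
  · ext i j
    fin_cases i <;> fin_cases j <;>
      simp [Matrix.mul_apply, Fin.sum_univ_succ, Matrix.cons_val_succ, Matrix.transpose_apply, Matrix.vecHead, Matrix.vecTail] <;>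
      nlinarith [hp, hq, hr]

lemma conj_fact {A : Matrix (Fin 2) (Fin 2) ℤ} (S : Matrix (Fin 2) (Fin 2) ℤ)
    (hS : ∀ i j, 0 ≤ S i j) {V : Matrix (Fin 2) (Fin 12) ℤ}
    (hV : ∀ i j, 0 ≤ V i j) (hA : A = V * Vᵀ) :
    ∃ W : Matrix (Fin 2) (Fin 12) ℤ, (∀ i j, 0 ≤ W i j) ∧ S * A * Sᵀ = W * Wᵀ := by
  refine ⟨S * V, ?_, ?_⟩
  · intro i j
    rw [Matrix.mul_apply]
    exact Finset.sum_nonneg fun l _ => mul_nonneg (hS i l) (hV l j)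
  · rw [hA, Matrix.transpose_mul, ← Matrix.mul_assoc, Matrix.mul_assoc (S * V)]

lemma aux : ∀ n : ℕ, ∀ a b c : ℤ, b.toNat = n → 0 ≤ a → 0 ≤ b → 0 ≤ c → b ^ 2 ≤ a * c →
    ∃ V : Matrix (Fin 2) (Fin 12) ℤ, (∀ i j, 0 ≤ V i j) ∧ !![a, b; b, c] = V * Vᵀ := by
  intro n
  induction n using Nat.strong_induction_on with
  | _ n ih =>
    intro a b c hn ha hb hc hdet
    by_cases h1 : b ≤ a ∧ b ≤ c
    · exact base_case a b c hb h1.1 h1.2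
    · push_neg at h1
      rcases le_or_gt a c with hac | hac
      · -- b > a, reduce b mod a
        have hba : a < b := by
          rcases le_or_gt b a with h | h
          · exact absurd (h1 h) (not_lt.mpr (h.trans hac))
          · exact h
        have ha1 : 0 < a := by
          rcases ha.lt_or_eq with h | h
          · exact h
          · exfalso; rw [← h] at hdet; nlinarith
        set k := b / a with hk_def
        set b' := b % a with hb'_def
        have hk : 0 ≤ k := Int.ediv_nonneg hb ha
        have hb'0 : 0 ≤ b' := Int.emod_nonneg b (ne_of_gt ha1)
        have hb'a : b' < a := Int.emod_lt_of_pos b ha1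
        have heq : b = a * k + b' := (Int.mul_ediv_add_emod b a).symm
        have hdet' : b' ^ 2 ≤ a * (c - 2 * k * b + k ^ 2 * a) := by nlinarith [heq]
        have hc' : 0 ≤ c - 2 * k * b + k ^ 2 * a := by nlinarith [sq_nonneg b']
        obtain ⟨V, hV, hfact⟩ := ih b'.toNat
          (by rw [← hn, hb'_def]; omega) a b'
          (c - 2 * k * b + k ^ 2 * a) rfl ha hb'0 hc' hdet'
        obtain ⟨W, hW, hprod⟩ := conj_fact !![1, 0; k, 1]
          (by intro i j; fin_cases i <;> fin_cases j <;> simp [hk]) hV hfact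
        refine ⟨W, hW, ?_⟩
        rw [← hprod]
        ext i j
        fin_cases i <;> fin_cases j <;>
          simp [Matrix.mul_apply, Fin.sum_univ_succ, Matrix.cons_val_succ, Matrix.transpose_apply, Matrix.vecHead, Matrix.vecTail] <;> nlinarith [heq]
      · -- b > c, reduce b mod c
        have hbc : c < b := by
          rcases le_or_gt b a with h | h
          · exact h1 h
          · exact hac.trans h
        have hc1 : 0 < c := by
          rcases hc.lt_or_eq with h | h
          · exact h
          · exfalso; rw [← h] at hdet; nlinarith
        set k := b / c with hk_def
        set b' := b % c with hb'_def
        have hk : 0 ≤ k := Int.ediv_nonneg hb hc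
        have hb'0 : 0 ≤ b' := Int.emod_nonneg b (ne_of_gt hc1)
        have hb'c : b' < c := Int.emod_lt_of_pos b hc1
        have heq : b = c * k + b' := (Int.mul_ediv_add_emod b c).symm
        have hdet' : b' ^ 2 ≤ (a - 2 * k * b + k ^ 2 * c) * c := by nlinarith [heq]
        have ha' : 0 ≤ a - 2 * k * b + k ^ 2 * c := by nlinarith [sq_nonneg b']
        obtain ⟨V, hV, hfact⟩ := ih b'.toNat
          (by rw [← hn, hb'_def]; omega) (a - 2 * k * b + k ^ 2 * c) b'
          c rfl ha' hb'0 hc hdet'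
        obtain ⟨W, hW, hprod⟩ := conj_fact !![1, k; 0, 1]
          (by intro i j; fin_cases i <;> fin_cases j <;> simp [hk]) hV hfact
        refine ⟨W, hW, ?_⟩
        rw [← hprod]
        ext i j
        fin_cases i <;> fin_cases j <;>
          simp [Matrix.mul_apply, Fin.sum_univ_succ, Matrix.cons_val_succ, Matrix.transpose_apply, Matrix.vecHead, Matrix.vecTail] <;> nlinarith [heq]

theorem cp_rank_le_twelve (a b c : ℤ)
    (ha : 0 ≤ a) (hb : 0 ≤ b) (hc : 0 ≤ c) (hdet : b ^ 2 ≤ a * c) :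
    ∃ (m : ℕ), m ≤ 12 ∧ ∃ V : Matrix (Fin 2) (Fin m) ℤ,
      (∀ i j, 0 ≤ V i j) ∧ !![a, b; b, c] = V * Vᵀ := by
  obtain ⟨V, hV, hfact⟩ := aux b.toNat a b c rfl ha hb hc hdet
  exact ⟨12, le_refl 12, V, hV, hfact⟩
end

section
/- Let A = [[a,b],[b,c]] be an integer doubly nonnegative matrix with a ≥ b, c ≥ b, b ≥ 7, and a - b ≡ 7 (mod 8), c - b ≡ 7 (mod 8), with b of the form 4^r(8k+7). Then A has integer cp-rank at most 10, via the decomposition A = diag(a-b-1, c-b+2) + (b-2)[[1,1],[1,1]] + (1,2)^T(1,2). -/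
open Matrix

private lemma mk10 (A B C : ℕ) (v w : Fin 10 → ℕ)
    (h1 : ∑ k, v k * v k = A) (h2 : ∑ k, v k * w k = B) (h3 : ∑ k, w k * w k = C) :
    ∃ V : Matrix (Fin 2) (Fin 10) ℤ, (∀ i j, 0 ≤ V i j) ∧
      !![(A : ℤ), (B : ℤ); (B : ℤ), (C : ℤ)] = V * Vᵀ := by
  refine ⟨Matrix.of ![fun k => (v k : ℤ), fun k => (w k : ℤ)], ?_, ?_⟩
  · intro i j
    fin_cases i <;> simp
  · have cast_sum : ∀ (x y : Fin 10 → ℕ), (((∑ k, x k * y k : ℕ) : ℤ)) = ∑ k, (x k : ℤ) * (y k : ℤ) := by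
      intro x y; push_cast; rfl
    ext i j
    fin_cases i <;> fin_cases j <;>
      simp [Matrix.mul_apply, Matrix.vecHead, Matrix.vecTail]
    · rw [← h1, cast_sum]
    · rw [← h2, cast_sum]
    · rw [← h2, cast_sum]
      exact Finset.sum_congr rfl fun k _ => mul_comm _ _
    · rw [← h3, cast_sum]

private lemma key_le (B D E : ℕ) (hB : 7 ≤ B) (hD : 7 ≤ D) (hDE : D ≤ E) :
    ∃ v w : Fin 10 → ℕ,
      (∑ k, v k * v k = B + D) ∧ (∑ k, v k * w k = B) ∧ (∑ k, w k * w k = B + E) := by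
  obtain ⟨q, hq⟩ : ∃ q, q = Nat.sqrt D := ⟨_, rfl⟩
  have hqD : q * q ≤ D := hq ▸ Nat.sqrt_le D
  have hDq : D < q*q + 2*q + 1 := by
    have h' := Nat.lt_succ_sqrt D; rw [← hq] at h'; nlinarith
  have hq2 : 2 ≤ q := hq ▸ Nat.le_sqrt.mpr (by omega)
  have hqq2 : 2*q ≤ q*q := by nlinarith
  by_cases hb : 2 * q + 2 ≤ B
  · -- QL template
    obtain ⟨R, hR⟩ : ∃ R, D + R = q*q + 2*q + 1 := ⟨q*q + 2*q + 1 - D, by omega⟩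
    have hR1 : 1 ≤ R := by omega
    have hR2q : R ≤ 2*q + 1 := by omega
    obtain ⟨g, hg⟩ : ∃ g, g = R / (q+1) := ⟨_, rfl⟩
    obtain ⟨R2, hr2⟩ : ∃ R2, R2 = R % (q+1) := ⟨_, rfl⟩
    have hmod : (q+1) * g + R2 = R := by rw [hg, hr2]; exact Nat.div_add_mod R (q+1)
    have hmod' : q*g + g + R2 = R := by rw [← hmod]; ring_nf
    have hR2 : R2 ≤ q := by
      have h' := Nat.mod_lt R (show 0 < q+1 by omega); omega
    have hg1 : g ≤ 1 := by
      have hlt : R < (q+1) * 2 := by omega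
      have h' := Nat.div_lt_of_lt_mul hlt
      omega
    obtain ⟨N, hN⟩ : ∃ N, B = N + (R + 1) := ⟨B - (R+1), by omega⟩
    obtain ⟨M, hM⟩ : ∃ M, E + (q*g + g) = M + (g*g + (R2*R2 + R2)) := by
      have hkey : g*g + (R2*R2 + R2) ≤ E + (q*g + g) := by
        have hRR : R2*R2 ≤ q*q := Nat.mul_le_mul hR2 hR2
        rcases (by omega : g = 0 ∨ g = 1) with h0 | h0 <;> subst h0 <;>
          simp only [Nat.mul_zero, Nat.mul_one, Nat.zero_mul, Nat.one_mul, Nat.add_zero] at hmod ⊢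
        · -- R2 = R ≤ q : need R2*R2 + R2 ≤ E
          omega
        · omega
      exact ⟨E + (q*g + g) - (g*g + (R2*R2 + R2)), by omega⟩
    obtain ⟨t1,t2,t3,t4,ht⟩ := Nat.sum_four_squares N
    obtain ⟨c1,c2,c3,c4,hc⟩ := Nat.sum_four_squares M
    simp only [pow_two] at ht hc
    refine ⟨![t1,t2,t3,t4,q+1,1,0,0,0,0], ![t1,t2,t3,t4,g,R2+1,c1,c2,c3,c4], ?_, ?_, ?_⟩
    · simp [Fin.sum_univ_succ]
      rw [show (q+1)*(q+1) = q*q + 2*q + 1 by ring]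
      omega
    · simp [Fin.sum_univ_succ]
      rw [show (q+1)*g = q*g + g by ring]
      omega
    · simp [Fin.sum_univ_succ]
      rw [show (R2+1)*(R2+1) = R2*R2 + 2*R2 + 1 by ring]
      omega
  · -- G6-1 template
    push_neg at hb
    have hq3 : 3 ≤ q := by omega
    obtain ⟨B', rfl⟩ : ∃ B', B = B' + 1 := ⟨B - 1, by omega⟩
    obtain ⟨s, hs⟩ : ∃ s, s = Nat.sqrt B' := ⟨_, rfl⟩
    have hs1 : s * s ≤ B' := hs ▸ Nat.sqrt_le B'
    have hs2 : B' < s*s + 2*s + 1 := by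
      have h' := Nat.lt_succ_sqrt B'; rw [← hs] at h'; nlinarith
    have hsq : s + 1 ≤ q := by
      by_contra hcon
      push_neg at hcon
      have hqs : q ≤ s := by omega
      have h1' : q * q ≤ s * s := Nat.mul_le_mul hqs hqs
      have h3q : 3 * q ≤ q * q := Nat.mul_le_mul_right q hq3
      omega
    obtain ⟨h1, hh1⟩ : ∃ h1, h1 = (B' + 1) / (s+1) := ⟨_, rfl⟩
    obtain ⟨h2, hh2⟩ : ∃ h2, h2 = (B' + 1) % (s+1) := ⟨_, rfl⟩
    have hdiv : (s+1) * h1 + h2 = B' + 1 := by rw [hh1, hh2]; exact Nat.div_add_mod _ _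
    have hdiv' : s*h1 + h1 + h2 = B' + 1 := by rw [← hdiv]; ring_nf
    have hh2p : h2 ≤ s := by
      have h' := Nat.mod_lt (B'+1) (show 0 < s+1 by omega); omega
    have hh1p : h1 ≤ s + 1 := by
      have hmul : h1 * (s+1) ≤ B' + 1 := hh1 ▸ Nat.div_mul_le_self _ _
      by_contra hcon
      push_neg at hcon
      have : (s+2) * (s+1) ≤ h1 * (s+1) := Nat.mul_le_mul (by omega) (by omega)
      nlinarith
    obtain ⟨A1, hA1⟩ : ∃ A1, (B' + 1) + D = A1 + (s*s + 2*s + 2) := by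
      refine ⟨(B' + 1) + D - (s*s + 2*s + 2), ?_⟩
      have h2s : 2*s + 1 ≤ q*q := by omega
      omega
    obtain ⟨C1, hC1⟩ : ∃ C1, (B' + 1) + E = C1 + (h1*h1 + h2*h2) := by
      have e1 : h1 * h1 ≤ (s+1) * h1 := Nat.mul_le_mul_right _ hh1p
      have e1' : h1 * h1 ≤ s*h1 + h1 := by
        rw [show s*h1 + h1 = (s+1)*h1 by ring]; exact e1
      have e2 : h2 * h2 ≤ s * s := Nat.mul_le_mul hh2p hh2p
      refine ⟨(B' + 1) + E - (h1*h1 + h2*h2), ?_⟩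
      omega
    obtain ⟨a1,a2,a3,a4,ha⟩ := Nat.sum_four_squares A1
    obtain ⟨c1,c2,c3,c4,hc⟩ := Nat.sum_four_squares C1
    simp only [pow_two] at ha hc
    refine ⟨![a1,a2,a3,a4,s+1,1,0,0,0,0], ![0,0,0,0,h1,h2,c1,c2,c3,c4], ?_, ?_, ?_⟩
    · simp [Fin.sum_univ_succ]
      rw [show (s+1)*(s+1) = s*s + 2*s + 1 by ring]
      omega
    · simp [Fin.sum_univ_succ]
      rw [show (s+1)*h1 = s*h1 + h1 by ring]
      omega
    · simp [Fin.sum_univ_succ]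
      omega

private lemma key_all (B D E : ℕ) (hB : 7 ≤ B) (hD : 7 ≤ D) (hE : 7 ≤ E) :
    ∃ v w : Fin 10 → ℕ,
      (∑ k, v k * v k = B + D) ∧ (∑ k, v k * w k = B) ∧ (∑ k, w k * w k = B + E) := by
  rcases le_total D E with hDE | hED
  · exact key_le B D E hB hD hDE
  · obtain ⟨v, w, h1, h2, h3⟩ := key_le B E D hB hE hED
    exact ⟨w, v, h3, by rw [← h2]; exact Finset.sum_congr rfl fun k _ => mul_comm _ _, h1⟩

theorem cp_rank_le_ten_case2 (a b c : ℤ)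
    (hab : b ≤ a) (hcb : b ≤ c) (hb7 : 7 ≤ b)
    (hdet : b ^ 2 ≤ a * c)
    (hmoda : (a - b) % 8 = 7) (hmodc : (c - b) % 8 = 7)
    (hbform : ∃ r k : ℕ, b = 4 ^ r * (8 * k + 7)) :
    ∃ (m : ℕ), m ≤ 10 ∧ ∃ V : Matrix (Fin 2) (Fin m) ℤ,
      (∀ i j, 0 ≤ V i j) ∧ !![a, b; b, c] = V * Vᵀ := by
  have hD7 : 7 ≤ a - b := by omega
  have hE7 : 7 ≤ c - b := by omega
  obtain ⟨B, hB⟩ : ∃ B : ℕ, (B : ℤ) = b := ⟨b.toNat, Int.toNat_of_nonneg (by omega)⟩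
  obtain ⟨D, hD⟩ : ∃ D : ℕ, (D : ℤ) = a - b := ⟨(a-b).toNat, Int.toNat_of_nonneg (by omega)⟩
  obtain ⟨E, hE⟩ : ∃ E : ℕ, (E : ℤ) = c - b := ⟨(c-b).toNat, Int.toNat_of_nonneg (by omega)⟩
  obtain ⟨v, w, h1, h2, h3⟩ := key_all B D E (by omega) (by omega) (by omega)
  obtain ⟨V, hpos, hV⟩ := mk10 (B + D) B (B + E) v w h1 h2 h3
  refine ⟨10, le_refl 10, V, hpos, ?_⟩
  rw [← hV]
  have e1 : ((B + D : ℕ) : ℤ) = a := by push_cast; omega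
  have e2 : ((B : ℕ) : ℤ) = b := hB
  have e3 : ((B + E : ℕ) : ℤ) = c := by push_cast; omega
  rw [e1, e2, e3]
end

section
/- Every 2×2 integer doubly nonnegative matrix has an integer cp-factorization with at most 11 columns; i.e., the integer cp-rank of any 2×2 integer doubly nonnegative matrix is at most 11. -/
open Matrix

set_option maxHeartbeats 1000000

/-! Auxiliary machinery: we represent a candidate factorization as a list of
columns `(x, y) : ℕ × ℕ`, and track the three sums `Σ x²`, `Σ x·y`, `Σ y²`. -/

private def SX (L : List (ℕ × ℕ)) : ℕ := (L.map fun p => p.1 * p.1).sum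
private def SP (L : List (ℕ × ℕ)) : ℕ := (L.map fun p => p.1 * p.2).sum
private def SY (L : List (ℕ × ℕ)) : ℕ := (L.map fun p => p.2 * p.2).sum

@[simp] private lemma SX_nil : SX [] = 0 := rfl
@[simp] private lemma SP_nil : SP [] = 0 := rfl
@[simp] private lemma SY_nil : SY [] = 0 := rfl

@[simp] private lemma SX_cons (p : ℕ × ℕ) (L : List (ℕ × ℕ)) :
    SX (p :: L) = p.1 * p.1 + SX L := by simp [SX]
@[simp] private lemma SP_cons (p : ℕ × ℕ) (L : List (ℕ × ℕ)) :
    SP (p :: L) = p.1 * p.2 + SP L := by simp [SP]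
@[simp] private lemma SY_cons (p : ℕ × ℕ) (L : List (ℕ × ℕ)) :
    SY (p :: L) = p.2 * p.2 + SY L := by simp [SY]

@[simp] private lemma SX_append (L M : List (ℕ × ℕ)) : SX (L ++ M) = SX L + SX M := by
  simp [SX]
@[simp] private lemma SP_append (L M : List (ℕ × ℕ)) : SP (L ++ M) = SP L + SP M := by
  simp [SP]
@[simp] private lemma SY_append (L M : List (ℕ × ℕ)) : SY (L ++ M) = SY L + SY M := by
  simp [SY]

/-- Four columns `(g, 0)` realizing `(n, 0, 0)`. -/
private lemma fourSqX (n : ℕ) :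
    ∃ L : List (ℕ × ℕ), L.length = 4 ∧ SX L = n ∧ SP L = 0 ∧ SY L = 0 := by
  obtain ⟨p, q, r, t, h⟩ := Nat.sum_four_squares n
  simp only [pow_two] at h
  refine ⟨[(p, 0), (q, 0), (r, 0), (t, 0)], rfl, ?_, by simp, by simp⟩
  simp only [SX_cons, SX_nil]
  omega

/-- Four columns `(0, g)` realizing `(0, 0, n)`. -/
private lemma fourSqY (n : ℕ) :
    ∃ L : List (ℕ × ℕ), L.length = 4 ∧ SX L = 0 ∧ SP L = 0 ∧ SY L = n := by
  obtain ⟨p, q, r, t, h⟩ := Nat.sum_four_squares n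
  simp only [pow_two] at h
  refine ⟨[(0, p), (0, q), (0, r), (0, t)], rfl, by simp, by simp, ?_⟩
  simp only [SY_cons, SY_nil]
  omega

/-- Four columns `(u, u)` realizing `(n, n, n)`. -/
private lemma fourSqDiag (n : ℕ) :
    ∃ L : List (ℕ × ℕ), L.length = 4 ∧ SX L = n ∧ SP L = n ∧ SY L = n := by
  obtain ⟨p, q, r, t, h⟩ := Nat.sum_four_squares n
  simp only [pow_two] at h
  refine ⟨[(p, p), (q, q), (r, r), (t, t)], rfl, ?_, ?_, ?_⟩ <;>
  · simp only [SX_cons, SX_nil, SP_cons, SP_nil, SY_cons, SY_nil]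
    omega

private lemma SX_shear (k : ℕ) (L : List (ℕ × ℕ)) :
    SX (L.map fun p => (p.1, k * p.1 + p.2)) = SX L := by
  induction L with
  | nil => simp
  | cons p L ih => simp [ih]

private lemma SP_shear (k : ℕ) (L : List (ℕ × ℕ)) :
    SP (L.map fun p => (p.1, k * p.1 + p.2)) = k * SX L + SP L := by
  induction L with
  | nil => simp
  | cons p L ih => simp [ih]; ring

private lemma SY_shear (k : ℕ) (L : List (ℕ × ℕ)) :
    SY (L.map fun p => (p.1, k * p.1 + p.2)) = k * k * SX L + 2 * (k * SP L) + SY L := by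
  induction L with
  | nil => simp
  | cons p L ih => simp [ih]; ring

private lemma SX_swap (L : List (ℕ × ℕ)) : SX (L.map Prod.swap) = SY L := by
  induction L with
  | nil => simp
  | cons p L ih => simp [ih]

private lemma SP_swap (L : List (ℕ × ℕ)) : SP (L.map Prod.swap) = SP L := by
  induction L with
  | nil => simp
  | cons p L ih => simp [ih]; ring

private lemma SY_swap (L : List (ℕ × ℕ)) : SY (L.map Prod.swap) = SX L := by
  induction L with
  | nil => simp
  | cons p L ih => simp [ih]

/-- The reduced case: `1 ≤ b < a ≤ c`. -/
private lemma reducedCase (a b c : ℕ) (hb : 1 ≤ b) (hba : b < a) (hac : a ≤ c) :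
    ∃ L : List (ℕ × ℕ), L.length ≤ 11 ∧ SX L = a ∧ SP L = b ∧ SY L = c := by
  set s := Nat.sqrt b with hs
  have hs1 : s * s ≤ b := Nat.sqrt_le b
  have hs2 : b < (s + 1) * (s + 1) := Nat.lt_succ_sqrt b
  have hsid : (s + 1) * (s + 1) = s * s + 2 * s + 1 := by ring
  have hspos : 1 ≤ s := Nat.sqrt_pos.2 hb
  have h2s : 2 * s ≤ s * s + 1 := by
    obtain ⟨m, hm⟩ : ∃ m, s = m + 1 := ⟨s - 1, by omega⟩
    have hmid : (m + 1) * (m + 1) = m * m + 2 * m + 1 := by ring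
    rw [hm]
    omega
  obtain ⟨e, hbe⟩ : ∃ e, s * s + e = b := Nat.le.dest hs1
  have he2s : e ≤ 2 * s := by omega
  obtain ⟨f, hcf⟩ : ∃ f, (b + 1) + f = c := Nat.le.dest (le_trans hba hac)
  -- c = b + (f+1)
  by_cases hC1 : e * e < e + (f + 1)
  · -- Case 1 : columns (s,s), (1,e) plus residuals
    obtain ⟨Rx, hRx⟩ : ∃ R, (s * s + 1) + R = a := Nat.le.dest (by omega)
    obtain ⟨Ry, hRy⟩ : ∃ R, (s * s + e * e) + R = c := Nat.le.dest (by omega)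
    obtain ⟨L1, hl1, hx1, hp1, hy1⟩ := fourSqX Rx
    obtain ⟨L2, hl2, hx2, hp2, hy2⟩ := fourSqY Ry
    refine ⟨[(s, s), (1, e)] ++ L1 ++ L2, by simp [hl1, hl2], ?_, ?_, ?_⟩ <;>
      simp [hx1, hx2, hp1, hp2, hy1, hy2] <;> omega
  · -- f + 1 + e ≤ e * e ; hence e ≥ 2
    have he2 : 2 ≤ e := by
      by_contra hh
      push_neg at hh
      interval_cases e <;> omega
    by_cases hC2 : f + 1 ≤ s
    · -- Case 2 : f' := f+1 ≤ s : columns diag(P), (f, f+1), residual X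
      have hcost : (f + 1) * f ≤ b := by
        have h1 : (f + 1) * f ≤ s * s := Nat.mul_le_mul hC2 (by omega)
        omega
      obtain ⟨P, hP⟩ : ∃ P, (f + 1) * f + P = b := Nat.le.dest hcost
      obtain ⟨D, hld, hdx, hdp, hdy⟩ := fourSqDiag P
      have hcm : f * (f + 1) = (f + 1) * f := by ring
      have hsq : (f + 1) * (f + 1) = (f + 1) * f + (f + 1) := by ring
      have hfx : f * f ≤ (f + 1) * f := Nat.mul_le_mul (by omega) le_rfl
      obtain ⟨R, hR⟩ : ∃ R, (f * f + P) + R = a := Nat.le.dest (by omega)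
      obtain ⟨L1, hl1, hx1, hp1, hy1⟩ := fourSqX R
      refine ⟨[(f, f + 1)] ++ D ++ L1, by simp [hld, hl1], ?_, ?_, ?_⟩ <;>
        simp [hdx, hdp, hdy, hx1, hp1, hy1] <;> omega
    · -- Case 3 : s < f + 1
      set t := Nat.sqrt (f + 1) with ht
      have ht1 : t * t ≤ f + 1 := Nat.sqrt_le _
      have ht2 : f + 1 < (t + 1) * (t + 1) := Nat.lt_succ_sqrt _
      have htid : (t + 1) * (t + 1) = t * t + 2 * t + 1 := by ring
      have htpos : 1 ≤ t := Nat.sqrt_pos.2 (by omega)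
      obtain ⟨ef, hef⟩ : ∃ ef, t * t + ef = f + 1 := Nat.le.dest ht1
      have hef2t : ef ≤ 2 * t := by omega
      have hte : t + 1 ≤ e := by
        by_contra hh
        push_neg at hh
        have h1 : e * e ≤ t * t := Nat.mul_le_mul (by omega) (by omega)
        omega
      set w := Nat.sqrt ef with hw
      have hw1 : w * w ≤ ef := Nat.sqrt_le _
      have hw2 : ef < (w + 1) * (w + 1) := Nat.lt_succ_sqrt _
      have hwid : (w + 1) * (w + 1) = w * w + 2 * w + 1 := by ring
      obtain ⟨g, hwg⟩ : ∃ g, w * w + g = ef := Nat.le.dest hw1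
      have hg2w : g ≤ 2 * w := by omega
      by_cases hgw : g ≤ w
      · -- Case 3a
        rcases Nat.eq_zero_or_pos g with hg0 | hgpos
        · -- g = 0
          obtain ⟨D, hld, hdx, hdp, hdy⟩ := fourSqDiag b
          obtain ⟨R, hR⟩ : ∃ R, b + R = a := Nat.le.dest (by omega)
          obtain ⟨L1, hl1, hx1, hp1, hy1⟩ := fourSqX R
          refine ⟨[(0, t), (0, w)] ++ D ++ L1, by simp [hld, hl1], ?_, ?_, ?_⟩ <;>
            simp [hdx, hdp, hdy, hx1, hp1, hy1] <;> omega
        · -- g = g₁ + 1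
          obtain ⟨g₁, hg₁⟩ : ∃ g₁, g = g₁ + 1 := ⟨g - 1, by omega⟩
          have hgg : (g₁ + 1) * g₁ ≤ w * w := Nat.mul_le_mul (by omega) (by omega)
          have hcost : (g₁ + 1) * g₁ ≤ b := by omega
          obtain ⟨P, hP⟩ : ∃ P, (g₁ + 1) * g₁ + P = b := Nat.le.dest hcost
          obtain ⟨D, hld, hdx, hdp, hdy⟩ := fourSqDiag P
          have hcm : g₁ * (g₁ + 1) = (g₁ + 1) * g₁ := by ring
          have hsq : (g₁ + 1) * (g₁ + 1) = (g₁ + 1) * g₁ + (g₁ + 1) := by ring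
          have hgx : g₁ * g₁ ≤ (g₁ + 1) * g₁ := Nat.mul_le_mul (by omega) le_rfl
          obtain ⟨R, hR⟩ : ∃ R, (g₁ * g₁ + P) + R = a := Nat.le.dest (by omega)
          obtain ⟨L1, hl1, hx1, hp1, hy1⟩ := fourSqX R
          refine ⟨[(0, t), (0, w), (g₁, g₁ + 1)] ++ D ++ L1,
            by simp [hld, hl1], ?_, ?_, ?_⟩ <;>
            simp [hdx, hdp, hdy, hx1, hp1, hy1] <;> omega
      · -- Case 3b : w < g, write g = w + (h₁ + 1) with h₁ + 1 ≤ w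
        obtain ⟨h₁, hh₁⟩ : ∃ h₁, g = w + (h₁ + 1) := ⟨g - w - 1, by omega⟩
        have hh1w : h₁ + 1 ≤ w := by omega
        have hA1 : (h₁ + 1) * h₁ ≤ w * h₁ := Nat.mul_le_mul hh1w le_rfl
        have hA2 : w * (h₁ + 1) ≤ w * w := Nat.mul_le_mul le_rfl hh1w
        have hA3 : w * (h₁ + 1) = w * h₁ + w := by ring
        have hcost : (w + 1) + (h₁ + 1) * h₁ ≤ b := by omega
        obtain ⟨P, hP⟩ : ∃ P, ((w + 1) + (h₁ + 1) * h₁) + P = b := Nat.le.dest hcost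
        obtain ⟨D, hld, hdx, hdp, hdy⟩ := fourSqDiag P
        have hcm : h₁ * (h₁ + 1) = (h₁ + 1) * h₁ := by ring
        have hsq : (h₁ + 1) * (h₁ + 1) = (h₁ + 1) * h₁ + (h₁ + 1) := by ring
        have hhx : h₁ * h₁ ≤ (h₁ + 1) * h₁ := Nat.mul_le_mul (by omega) le_rfl
        obtain ⟨R, hR⟩ : ∃ R, (1 + h₁ * h₁ + P) + R = a := Nat.le.dest (by omega)
        obtain ⟨L1, hl1, hx1, hp1, hy1⟩ := fourSqX R
        refine ⟨[(0, t), (1, w + 1), (h₁, h₁ + 1)] ++ D ++ L1,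
          by simp [hld, hl1], ?_, ?_, ?_⟩ <;>
          simp [hdx, hdp, hdy, hx1, hp1, hy1] <;> omega

/-- Main existence lemma over ℕ, by strong induction on `a + c`. -/
private lemma keyAux : ∀ n a b c : ℕ, a + c ≤ n → b * b ≤ a * c →
    ∃ L : List (ℕ × ℕ), L.length ≤ 11 ∧ SX L = a ∧ SP L = b ∧ SY L = c := by
  intro n
  induction n using Nat.strong_induction_on with
  | _ n ih =>
    intro a b c hn hdet
    rcases Nat.eq_zero_or_pos b with hb0 | hbpos
    · -- diagonal case
      obtain ⟨L1, hl1, hx1, hp1, hy1⟩ := fourSqX a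
      obtain ⟨L2, hl2, hx2, hp2, hy2⟩ := fourSqY c
      exact ⟨L1 ++ L2, by simp [hl1, hl2], by simp [hx1, hx2],
        by simp [hp1, hp2, hb0], by simp [hy1, hy2]⟩
    · have hbb : 1 ≤ b * b := Nat.mul_pos hbpos hbpos
      have hapos : 1 ≤ a := by
        rcases Nat.eq_zero_or_pos a with h | h
        · rw [h, Nat.zero_mul] at hdet; omega
        · exact h
      have hcpos : 1 ≤ c := by
        rcases Nat.eq_zero_or_pos c with h | h
        · rw [h, Nat.mul_zero] at hdet; omega
        · exact h
      rcases le_or_gt a c with hac | hca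
      · rcases lt_or_ge b a with hba | hab
        · exact reducedCase a b c hbpos hba hac
        · -- a ≤ b : shear reduction
          set k := b / a with hk
          set b' := b % a with hb'
          have hkpos : 1 ≤ k := (Nat.one_le_div_iff hapos).2 hab
          have hbk : a * k + b' = b := Nat.div_add_mod b a
          have hkey : b * b = b' * b' + a * (k * k * a + 2 * (k * b')) := by
            rw [← hbk]; ring
          have hXc : k * k * a + 2 * (k * b') ≤ c := by
            have h1 : a * (k * k * a + 2 * (k * b')) ≤ a * c := by omega
            exact Nat.le_of_mul_le_mul_left h1 hapos
          obtain ⟨c', hc'⟩ : ∃ c', (k * k * a + 2 * (k * b')) + c' = c := Nat.le.dest hXc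
          have hacx : a * c = a * (k * k * a + 2 * (k * b')) + a * c' := by
            rw [← hc']; ring
          have hdet' : b' * b' ≤ a * c' := by omega
          have hX1 : 0 < k * k * a := Nat.mul_pos (Nat.mul_pos hkpos hkpos) hapos
          have hm : a + c' < n := by omega
          obtain ⟨L, hl, hx, hp, hy⟩ := ih (a + c') hm a b' c' le_rfl hdet'
          have hcm : k * a = a * k := by ring
          refine ⟨L.map fun p => (p.1, k * p.1 + p.2), by simpa using hl, ?_, ?_, ?_⟩
          · rw [SX_shear, hx]
          · rw [SP_shear, hx, hp]; omega
          · rw [SY_shear, hx, hp, hy]; omega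
      · rcases lt_or_ge b c with hbc | hcb
        · obtain ⟨L, hl, hx, hp, hy⟩ := reducedCase c b a hbpos hbc (le_of_lt hca)
          exact ⟨L.map Prod.swap, by simpa using hl,
            by rw [SX_swap, hy], by rw [SP_swap, hp], by rw [SY_swap, hx]⟩
        · -- c ≤ b : shear reduction on the swapped matrix
          set k := b / c with hk
          set b' := b % c with hb'
          have hkpos : 1 ≤ k := (Nat.one_le_div_iff hcpos).2 hcb
          have hbk : c * k + b' = b := Nat.div_add_mod b c
          have hkey : b * b = b' * b' + c * (k * k * c + 2 * (k * b')) := by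
            rw [← hbk]; ring
          have hca' : c * a = a * c := by ring
          have hXa : k * k * c + 2 * (k * b') ≤ a := by
            have h1 : c * (k * k * c + 2 * (k * b')) ≤ c * a := by omega
            exact Nat.le_of_mul_le_mul_left h1 hcpos
          obtain ⟨a', ha'⟩ : ∃ a', (k * k * c + 2 * (k * b')) + a' = a := Nat.le.dest hXa
          have hacx : c * a = c * (k * k * c + 2 * (k * b')) + c * a' := by
            rw [← ha']; ring
          have hdet' : b' * b' ≤ c * a' := by omega
          have hX1 : 0 < k * k * c := Nat.mul_pos (Nat.mul_pos hkpos hkpos) hcpos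
          have hm : c + a' < n := by omega
          obtain ⟨L, hl, hx, hp, hy⟩ := ih (c + a') hm c b' a' le_rfl hdet'
          have hcm : k * c = c * k := by ring
          refine ⟨(L.map fun p => (p.1, k * p.1 + p.2)).map Prod.swap,
            by simpa using hl, ?_, ?_, ?_⟩
          · rw [SX_swap, SY_shear, hx, hp, hy]; omega
          · rw [SP_swap, SP_shear, hx, hp]; omega
          · rw [SY_swap, SX_shear, hx]

private lemma fin_sum_list {M : Type*} [AddCommMonoid M] (L : List (ℕ × ℕ)) (F : ℕ × ℕ → M) :
    ∑ j : Fin L.length, F (L.get j) = (L.map F).sum := by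
  conv_rhs => rw [← List.ofFn_get L]
  rw [List.map_ofFn, List.sum_ofFn]
  rfl

private lemma cast_sum_list (L : List (ℕ × ℕ)) (F : ℕ × ℕ → ℕ) :
    ((L.map F).sum : ℤ) = (L.map fun p => (F p : ℤ)).sum := by
  induction L with
  | nil => simp
  | cons p L ih => simp [ih]

private lemma castSX (L : List (ℕ × ℕ)) :
    ((SX L : ℕ) : ℤ) = ∑ j : Fin L.length, ((L.get j).1 : ℤ) * ((L.get j).1 : ℤ) := by
  rw [fin_sum_list L fun p => ((p.1 : ℤ) * (p.1 : ℤ)), SX, cast_sum_list]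
  simp [Nat.cast_mul]

private lemma castSP (L : List (ℕ × ℕ)) :
    ((SP L : ℕ) : ℤ) = ∑ j : Fin L.length, ((L.get j).1 : ℤ) * ((L.get j).2 : ℤ) := by
  rw [fin_sum_list L fun p => ((p.1 : ℤ) * (p.2 : ℤ)), SP, cast_sum_list]
  simp [Nat.cast_mul]

private lemma castSY (L : List (ℕ × ℕ)) :
    ((SY L : ℕ) : ℤ) = ∑ j : Fin L.length, ((L.get j).2 : ℤ) * ((L.get j).2 : ℤ) := by
  rw [fin_sum_list L fun p => ((p.2 : ℤ) * (p.2 : ℤ)), SY, cast_sum_list]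
  simp [Nat.cast_mul]

theorem cp_rank_le_eleven (a b c : ℤ)
    (ha : 0 ≤ a) (hb : 0 ≤ b) (hc : 0 ≤ c) (hdet : b ^ 2 ≤ a * c) :
    ∃ (m : ℕ), m ≤ 11 ∧ ∃ V : Matrix (Fin 2) (Fin m) ℤ,
      (∀ i j, 0 ≤ V i j) ∧ !![a, b; b, c] = V * Vᵀ := by
  obtain ⟨A, rfl⟩ : ∃ A : ℕ, (A : ℤ) = a := ⟨a.toNat, Int.toNat_of_nonneg ha⟩
  obtain ⟨B, rfl⟩ : ∃ B : ℕ, (B : ℤ) = b := ⟨b.toNat, Int.toNat_of_nonneg hb⟩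
  obtain ⟨C, rfl⟩ : ∃ C : ℕ, (C : ℤ) = c := ⟨c.toNat, Int.toNat_of_nonneg hc⟩
  have hdet' : B * B ≤ A * C := by
    have := hdet
    rw [pow_two] at this
    exact_mod_cast this
  obtain ⟨L, hl, hx, hp, hy⟩ := keyAux (A + C) A B C le_rfl hdet'
  refine ⟨L.length, hl,
    Matrix.of ![fun j => ((L.get j).1 : ℤ), fun j => ((L.get j).2 : ℤ)], ?_, ?_⟩
  · intro i j
    fin_cases i <;>
      simp only [Matrix.of_apply, Matrix.cons_val_zero, Matrix.cons_val_one,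
        Matrix.head_cons] <;>
      exact Int.natCast_nonneg _
  · ext i j
    fin_cases i <;> fin_cases j <;>
      rw [Matrix.mul_apply] <;>
      simp only [Fin.mk_zero, Fin.mk_one, Fin.isValue, Matrix.transpose_apply, Matrix.of_apply,
        Matrix.cons_val', Matrix.cons_val_zero, Matrix.cons_val_one, Matrix.head_cons,
        Matrix.empty_val', Matrix.cons_val_fin_one, Matrix.head_fin_const]
    · rw [← hx]; exact castSX L
    · rw [← hp]; exact castSP L
    · have h2 : ((SP L : ℕ) : ℤ) = ∑ j : Fin L.length, ((L.get j).2 : ℤ) * ((L.get j).1 : ℤ) := by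
        rw [castSP L]
        exact Finset.sum_congr rfl fun j _ => mul_comm _ _
      rw [← hp, h2]
    · rw [← hy]; exact castSY L
end

section
/- Let A = [[a,1],[1,c]] with positive integers a, c and ac ≥ 1. In any integer cp-factorization A = V V^T, exactly one column of V equals (1,1)^T, and the integer cp-rank of A equals 1 + p + q, where p and q are the least numbers of squares representing a-1 and c-1 respectively. -/
open Matrix

noncomputable def intCpRank (A : Matrix (Fin 2) (Fin 2) ℤ) : ℕ :=
  sInf {m : ℕ | ∃ V : Matrix (Fin 2) (Fin m) ℤ, (∀ i j, 0 ≤ V i j) ∧ A = V * Vᵀ}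

lemma sq_set_nonempty (n : ℤ) (hn : 0 ≤ n) :
    {s : ℕ | ∃ f : Fin s → ℤ, n = ∑ i, f i ^ 2}.Nonempty := by
  obtain ⟨w, x, y, z, h⟩ := Nat.sum_four_squares n.toNat
  refine ⟨4, ![(w : ℤ), x, y, z], ?_⟩
  rw [Fin.sum_univ_four]
  simp only [Matrix.cons_val_zero, Matrix.cons_val_one, Matrix.head_cons,
    Matrix.cons_val_two, Matrix.tail_cons, Matrix.cons_val_three]
  have := congrArg (fun k : ℕ => (k : ℤ)) h
  push_cast at this
  rw [this]
  exact (Int.toNat_of_nonneg hn).symm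

lemma col_structure {m : ℕ} (a c : ℤ) (V : Matrix (Fin 2) (Fin m) ℤ)
    (hV0 : ∀ i j, 0 ≤ V i j) (hV : !![a, 1; 1, c] = V * Vᵀ) :
    ∃ j0 : Fin m, V 0 j0 = 1 ∧ V 1 j0 = 1 ∧ ∀ j, j ≠ j0 → V 0 j * V 1 j = 0 := by
  have h01 : (1 : ℤ) = ∑ j, V 0 j * V 1 j := by
    have := congrFun (congrFun hV 0) 1
    simpa [Matrix.mul_apply] using this
  have hterm : ∀ j, 0 ≤ V 0 j * V 1 j := fun j => mul_nonneg (hV0 0 j) (hV0 1 j)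
  have hex : ∃ j0, 0 < V 0 j0 * V 1 j0 := by
    by_contra h
    push_neg at h
    have h0 : ∑ j, V 0 j * V 1 j = 0 :=
      Finset.sum_eq_zero fun j _ => le_antisymm (h j) (hterm j)
    rw [h0] at h01
    exact one_ne_zero h01
  obtain ⟨j0, hj0⟩ := hex
  have hsplit : ∑ j, V 0 j * V 1 j =
      V 0 j0 * V 1 j0 + ∑ j ∈ Finset.univ.erase j0, V 0 j * V 1 j :=
    (Finset.add_sum_erase _ _ (Finset.mem_univ j0)).symm
  have hnn : 0 ≤ ∑ j ∈ Finset.univ.erase j0, V 0 j * V 1 j :=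
    Finset.sum_nonneg fun j _ => hterm j
  have hsum0 : ∑ j ∈ Finset.univ.erase j0, V 0 j * V 1 j = 0 := by
    have : 0 < V 0 j0 * V 1 j0 := hj0
    have h1 : V 0 j0 * V 1 j0 ≥ 1 := this
    linarith [h01.trans hsplit]
  have hrest : ∀ j ∈ Finset.univ.erase j0, V 0 j * V 1 j = 0 := fun j hj =>
    (Finset.sum_eq_zero_iff_of_nonneg (fun j _ => hterm j)).mp hsum0 j hj
  have hone : V 0 j0 * V 1 j0 = 1 := by
    rw [hsplit, hsum0, add_zero] at h01
    exact h01.symm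
  rcases Int.mul_eq_one_iff_eq_one_or_neg_one.mp hone with ⟨h0, h1⟩ | ⟨h0, h1⟩
  · exact ⟨j0, h0, h1, fun j hj => hrest j (Finset.mem_erase.mpr ⟨hj, Finset.mem_univ j⟩)⟩
  · exfalso; have := hV0 0 j0; rw [h0] at this; norm_num at this

lemma row_bound {m : ℕ} (x : ℤ) (u : Fin m → ℤ) (j0 : Fin m)
    (hx : x = ∑ j, u j * u j) (h1 : u j0 = 1) :
    ∃ S : Finset (Fin m), (∀ j ∈ S, u j ≠ 0 ∧ j ≠ j0) ∧
      sInf {s : ℕ | ∃ f : Fin s → ℤ, x - 1 = ∑ k, f k ^ 2} ≤ S.card := by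
  classical
  set S := (Finset.univ.erase j0).filter (fun j => u j ≠ 0) with hSdef
  have hmem : ∀ j ∈ S, u j ≠ 0 ∧ j ∈ Finset.univ.erase j0 := by
    intro j hj
    rw [hSdef, Finset.mem_filter] at hj
    exact ⟨hj.2, hj.1⟩
  have hx1 : x - 1 = ∑ j ∈ S, u j ^ 2 := by
    have h2 : ∑ j ∈ S, u j ^ 2 = ∑ j ∈ Finset.univ.erase j0, u j ^ 2 := by
      apply Finset.sum_filter_of_ne
      intro j _ hne h0
      exact hne (by rw [h0]; ring)
    have h3 : u j0 ^ 2 + ∑ j ∈ Finset.univ.erase j0, u j ^ 2 = ∑ j, u j ^ 2 :=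
      Finset.add_sum_erase _ (fun j => u j ^ 2) (Finset.mem_univ j0)
    have h4 : x = ∑ j, u j ^ 2 := by
      rw [hx]; exact Finset.sum_congr rfl fun j _ => (sq (u j)).symm
    rw [h2]
    rw [h1] at h3
    rw [h4, ← h3]
    ring
  refine ⟨S, fun j hj => ⟨(hmem j hj).1, (Finset.mem_erase.mp (hmem j hj).2).1⟩,
    Nat.sInf_le ?_⟩
  refine ⟨fun i => u ((S.equivFin).symm i), ?_⟩
  rw [hx1, ← Finset.sum_coe_sort S (fun j => u j ^ 2),
    ← Equiv.sum_comp (S.equivFin).symm (fun y : {z // z ∈ S} => u (y : Fin m) ^ 2)]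

lemma upper_mem (a c : ℤ) (p q : ℕ) (f : Fin p → ℤ) (g : Fin q → ℤ)
    (hf : a - 1 = ∑ i, f i ^ 2) (hg : c - 1 = ∑ i, g i ^ 2) :
    ∃ V : Matrix (Fin 2) (Fin (1 + p + q)) ℤ, (∀ i j, 0 ≤ V i j) ∧
      !![a, 1; 1, c] = V * Vᵀ := by
  classical
  let e : (Fin 1 ⊕ Fin p) ⊕ Fin q ≃ Fin (1 + p + q) :=
    (Equiv.sumCongr finSumFinEquiv (Equiv.refl (Fin q))).trans finSumFinEquiv
  let W : Fin 2 → ((Fin 1 ⊕ Fin p) ⊕ Fin q) → ℤ := fun i j =>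
    match j with
    | Sum.inl (Sum.inl _) => 1
    | Sum.inl (Sum.inr k) => if i = 0 then |f k| else 0
    | Sum.inr k => if i = 1 then |g k| else 0
  have hWnn : ∀ i j, 0 ≤ W i j := by
    intro i j
    rcases j with (⟨_⟩ | k) | k <;> simp [W] <;> split <;> simp [abs_nonneg]
  refine ⟨Matrix.of (fun i j => W i (e.symm j)), fun i j => hWnn i (e.symm j), ?_⟩
  have key : ∀ i k : Fin 2,
      (Matrix.of (fun i j => W i (e.symm j)) * (Matrix.of (fun i j => W i (e.symm j)))ᵀ) i k
        = ∑ j', W i j' * W k j' := by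
    intro i k
    rw [Matrix.mul_apply]
    simp only [Matrix.transpose_apply, Matrix.of_apply]
    exact Equiv.sum_comp e.symm (fun j' => W i j' * W k j')
  ext i k
  rw [key i k, Fintype.sum_sum_type, Fintype.sum_sum_type]
  fin_cases i <;> fin_cases k <;>
    simp [W, abs_mul_abs_self, ← sq] <;>
    linarith [hf, hg]

lemma lower_bound {m : ℕ} (a c : ℤ) (V : Matrix (Fin 2) (Fin m) ℤ)
    (hV0 : ∀ i j, 0 ≤ V i j) (hV : !![a, 1; 1, c] = V * Vᵀ) :
    1 + sInf {s : ℕ | ∃ f : Fin s → ℤ, a - 1 = ∑ i, f i ^ 2}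
      + sInf {s : ℕ | ∃ f : Fin s → ℤ, c - 1 = ∑ i, f i ^ 2} ≤ m := by
  obtain ⟨j0, h0, h1, hprod⟩ := col_structure a c V hV0 hV
  have h00 : a = ∑ j, V 0 j * V 0 j := by
    have := congrFun (congrFun hV 0) 0; simpa [Matrix.mul_apply] using this
  have h11 : c = ∑ j, V 1 j * V 1 j := by
    have := congrFun (congrFun hV 1) 1; simpa [Matrix.mul_apply] using this
  obtain ⟨S, hS, hpS⟩ := row_bound a (V 0) j0 h00 h0
  obtain ⟨T, hT, hqT⟩ := row_bound c (V 1) j0 h11 h1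
  have hdisj : Disjoint S T := by
    rw [Finset.disjoint_left]
    intro j hjS hjT
    have hz := hprod j (hS j hjS).2
    rcases mul_eq_zero.mp hz with h | h
    · exact (hS j hjS).1 h
    · exact (hT j hjT).1 h
  have hj0 : j0 ∉ S ∪ T := by
    intro h
    rcases Finset.mem_union.mp h with h | h
    · exact (hS j0 h).2 rfl
    · exact (hT j0 h).2 rfl
  have hcard : (insert j0 (S ∪ T)).card ≤ m := by
    calc (insert j0 (S ∪ T)).card ≤ Finset.univ.card := Finset.card_le_univ _
    _ = m := by simp
  rw [Finset.card_insert_of_notMem hj0, Finset.card_union_of_disjoint hdisj] at hcard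
  have := Nat.add_le_add (Nat.add_le_add (le_refl 1) hpS) hqT
  linarith

theorem off_diag_one_structure (a c : ℤ) (ha : 0 < a) (hc : 0 < c) (hdet : 1 ≤ a * c) :
    (∀ (m : ℕ) (V : Matrix (Fin 2) (Fin m) ℤ), (∀ i j, 0 ≤ V i j) →
      !![a, 1; 1, c] = V * Vᵀ → ∃! j : Fin m, V 0 j = 1 ∧ V 1 j = 1) ∧
    intCpRank !![a, 1; 1, c] =
      1 + sInf {s : ℕ | ∃ f : Fin s → ℤ, a - 1 = ∑ i, f i ^ 2}
        + sInf {s : ℕ | ∃ f : Fin s → ℤ, c - 1 = ∑ i, f i ^ 2} := by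
  constructor
  · intro m V hV0 hV
    obtain ⟨j0, h0, h1, hprod⟩ := col_structure a c V hV0 hV
    refine ⟨j0, ⟨h0, h1⟩, ?_⟩
    rintro j ⟨hj0', hj1'⟩
    by_contra hne
    have := hprod j hne
    rw [hj0', hj1'] at this
    norm_num at this
  · set p := sInf {s : ℕ | ∃ f : Fin s → ℤ, a - 1 = ∑ i, f i ^ 2} with hp
    set q := sInf {s : ℕ | ∃ f : Fin s → ℤ, c - 1 = ∑ i, f i ^ 2} with hq
    obtain ⟨fa, hfa⟩ := Nat.sInf_mem (sq_set_nonempty (a - 1) (by linarith))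
    obtain ⟨fc, hfc⟩ := Nat.sInf_mem (sq_set_nonempty (c - 1) (by linarith))
    obtain ⟨V, hVnn, hVfac⟩ := upper_mem a c p q fa fc hfa hfc
    apply le_antisymm
    · exact Nat.sInf_le ⟨V, hVnn, hVfac⟩
    · have hne : {m : ℕ | ∃ V : Matrix (Fin 2) (Fin m) ℤ,
          (∀ i j, 0 ≤ V i j) ∧ !![a, 1; 1, c] = V * Vᵀ}.Nonempty :=
        ⟨1 + p + q, V, hVnn, hVfac⟩
      obtain ⟨W, hWnn, hWfac⟩ := Nat.sInf_mem hne
      exact lower_bound a c W hWnn hWfac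
end

section
/- If a and c are positive integers both divisible by 8, then the matrix [[a,1],[1,c]] has integer cp-rank exactly 9. -/
open Matrix

/-- Pad a sum of at most `n` squares to a sum of exactly `n` squares. -/
lemma pad_squares {ι : Type*} [DecidableEq ι] :
    ∀ (n : ℕ) (s : Finset ι) (g : ι → ℤ), s.card ≤ n →
      ∃ v : Fin n → ℤ, ∑ k ∈ s, g k * g k = ∑ i, v i * v i := by
  intro n
  induction n with
  | zero =>
    intro s g h
    have : s = ∅ := Finset.card_eq_zero.mp (Nat.le_zero.mp h)
    exact ⟨fun i => 0, by simp [this]⟩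
  | succ n ih =>
    intro s g h
    rcases s.eq_empty_or_nonempty with rfl | ⟨x, hx⟩
    · exact ⟨fun i => 0, by simp⟩
    · have hcard : (s.erase x).card ≤ n := by
        have := Finset.card_erase_of_mem hx
        omega
      obtain ⟨v, hv⟩ := ih (s.erase x) g hcard
      refine ⟨Fin.cons (g x) v, ?_⟩
      rw [Fin.sum_univ_succ, ← Finset.add_sum_erase s _ hx, hv]
      simp

lemma no_three_squares (x y z t : ℤ) : x * x + y * y + z * z ≠ 8 * t - 1 := by
  intro h
  have h8 : ∀ u v w : ZMod 8, u * u + v * v + w * w ≠ -1 := by decide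
  have := congrArg (Int.cast : ℤ → ZMod 8) h
  push_cast at this
  have h80 : (8 : ZMod 8) = 0 := rfl
  exact h8 x y z (by rw [this, h80]; ring)

lemma lower_bound_s16 (a c : ℤ) (ha8 : 8 ∣ a) (hc8 : 8 ∣ c) (m : ℕ)
    (V : Matrix (Fin 2) (Fin m) ℤ) (hV : ∀ i j, 0 ≤ V i j)
    (hA : !![a, 1; 1, c] = V * Vᵀ) : 9 ≤ m := by
  have h01 : ∑ k, V 0 k * V 1 k = 1 := by
    have := congrFun (congrFun hA 0) 1
    simp [Matrix.mul_apply] at this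
    exact this.symm
  have h00 : ∑ k, V 0 k * V 0 k = a := by
    have := congrFun (congrFun hA 0) 0
    simp [Matrix.mul_apply] at this
    exact this.symm
  have h11 : ∑ k, V 1 k * V 1 k = c := by
    have := congrFun (congrFun hA 1) 1
    simp [Matrix.mul_apply] at this
    exact this.symm
  obtain ⟨j, -, hj⟩ := Finset.exists_ne_zero_of_sum_ne_zero (f := fun k => V 0 k * V 1 k)
    (by rw [h01]; exact one_ne_zero)
  have hm : 0 < m := j.pos
  have hrestnn : (0:ℤ) ≤ ∑ k ∈ Finset.univ.erase j, V 0 k * V 1 k :=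
    Finset.sum_nonneg fun k _ => mul_nonneg (hV 0 k) (hV 1 k)
  have hsplit : V 0 j * V 1 j + ∑ k ∈ Finset.univ.erase j, V 0 k * V 1 k = 1 := by
    rw [Finset.add_sum_erase Finset.univ (fun k => V 0 k * V 1 k) (Finset.mem_univ j), h01]
  have hjpos : 1 ≤ V 0 j * V 1 j :=
    lt_of_le_of_ne (mul_nonneg (hV 0 j) (hV 1 j)) (Ne.symm hj)
  have hjj : V 0 j * V 1 j = 1 := le_antisymm (by linarith) hjpos
  have hrest : ∑ k ∈ Finset.univ.erase j, V 0 k * V 1 k = 0 := by linarith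
  have hz : ∀ k ∈ Finset.univ.erase j, V 0 k * V 1 k = 0 :=
    (Finset.sum_eq_zero_iff_of_nonneg
      (fun k _ => mul_nonneg (hV 0 k) (hV 1 k))).mp hrest
  have hV0j : V 0 j = 1 := Int.eq_one_of_mul_eq_one_right (hV 0 j) hjj
  have hV1j : V 1 j = 1 := by
    rw [hV0j, one_mul] at hjj; exact hjj
  -- the two support sets
  set S0 : Finset (Fin m) := (Finset.univ.erase j).filter (fun k => V 0 k ≠ 0) with hS0
  set S1 : Finset (Fin m) := (Finset.univ.erase j).filter (fun k => V 1 k ≠ 0) with hS1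
  have hsum0 : ∑ k ∈ S0, V 0 k * V 0 k = a - 1 := by
    have h1 : ∑ k ∈ S0, V 0 k * V 0 k = ∑ k ∈ Finset.univ.erase j, V 0 k * V 0 k := by
      apply Finset.sum_subset (Finset.filter_subset _ _)
      intro k hk hk'
      have : V 0 k = 0 := by
        by_contra hne
        exact hk' (Finset.mem_filter.mpr ⟨hk, hne⟩)
      simp [this]
    have h2 : V 0 j * V 0 j + ∑ k ∈ Finset.univ.erase j, V 0 k * V 0 k = a := by
      rw [Finset.add_sum_erase Finset.univ (fun k => V 0 k * V 0 k) (Finset.mem_univ j), h00]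
    rw [hV0j, one_mul] at h2
    rw [h1]
    linarith
  have hsum1 : ∑ k ∈ S1, V 1 k * V 1 k = c - 1 := by
    have h1 : ∑ k ∈ S1, V 1 k * V 1 k = ∑ k ∈ Finset.univ.erase j, V 1 k * V 1 k := by
      apply Finset.sum_subset (Finset.filter_subset _ _)
      intro k hk hk'
      have : V 1 k = 0 := by
        by_contra hne
        exact hk' (Finset.mem_filter.mpr ⟨hk, hne⟩)
      simp [this]
    have h2 : V 1 j * V 1 j + ∑ k ∈ Finset.univ.erase j, V 1 k * V 1 k = c := by
      rw [Finset.add_sum_erase Finset.univ (fun k => V 1 k * V 1 k) (Finset.mem_univ j), h11]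
    rw [hV1j, one_mul] at h2
    rw [h1]
    linarith
  obtain ⟨t, ht⟩ := ha8
  obtain ⟨u, hu⟩ := hc8
  have hcard0 : 4 ≤ S0.card := by
    by_contra h
    push_neg at h
    obtain ⟨v, hv⟩ := pad_squares 3 S0 (fun k => V 0 k) (by omega)
    rw [hsum0, Fin.sum_univ_three] at hv
    exact no_three_squares (v 0) (v 1) (v 2) t (by rw [← hv, ht])
  have hcard1 : 4 ≤ S1.card := by
    by_contra h
    push_neg at h
    obtain ⟨v, hv⟩ := pad_squares 3 S1 (fun k => V 1 k) (by omega)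
    rw [hsum1, Fin.sum_univ_three] at hv
    exact no_three_squares (v 0) (v 1) (v 2) u (by rw [← hv, hu])
  have hdisj : Disjoint S0 S1 := by
    rw [Finset.disjoint_left]
    intro k hk0 hk1
    obtain ⟨hk, h0⟩ := Finset.mem_filter.mp hk0
    obtain ⟨-, h1⟩ := Finset.mem_filter.mp hk1
    exact mul_ne_zero h0 h1 (hz k hk)
  have hub : (S0 ∪ S1).card ≤ (Finset.univ.erase j).card :=
    Finset.card_le_card (Finset.union_subset (Finset.filter_subset _ _)
      (Finset.filter_subset _ _))
  rw [Finset.card_union_of_disjoint hdisj] at hub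
  have herase : (Finset.univ.erase j).card = m - 1 := by
    rw [Finset.card_erase_of_mem (Finset.mem_univ j)]
    simp
  omega

theorem cp_rank_nine (a c : ℤ) (ha : 0 < a) (hc : 0 < c)
    (ha8 : 8 ∣ a) (hc8 : 8 ∣ c) :
    intCpRank !![a, 1; 1, c] = 9 := by
  have mem9 : 9 ∈ {m : ℕ | ∃ V : Matrix (Fin 2) (Fin m) ℤ,
      (∀ i j, 0 ≤ V i j) ∧ !![a, 1; 1, c] = V * Vᵀ} := by
    obtain ⟨p, q, r, s, hpqrs⟩ := Nat.sum_four_squares (a - 1).toNat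
    obtain ⟨p', q', r', s', hpqrs'⟩ := Nat.sum_four_squares (c - 1).toNat
    have hpa : (p:ℤ)^2 + q^2 + r^2 + s^2 = a - 1 := by
      have := congrArg (Nat.cast : ℕ → ℤ) hpqrs
      push_cast at this
      rwa [Int.toNat_of_nonneg (by omega)] at this
    have hpc : (p':ℤ)^2 + q'^2 + r'^2 + s'^2 = c - 1 := by
      have := congrArg (Nat.cast : ℕ → ℤ) hpqrs'
      push_cast at this
      rwa [Int.toNat_of_nonneg (by omega)] at this
    set w0 : Fin 9 → ℕ := ![1, p, q, r, s, 0, 0, 0, 0] with hw0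
    set w1 : Fin 9 → ℕ := ![1, 0, 0, 0, 0, p', q', r', s'] with hw1
    refine ⟨Matrix.of ![fun k => ((w0 k : ℤ)), fun k => ((w1 k : ℤ))], ?_, ?_⟩
    · intro i k
      fin_cases i <;> simp
    · ext i k
      fin_cases i <;> fin_cases k <;>
        simp [Matrix.mul_apply, Fin.sum_univ_succ, hw0, hw1, Matrix.vecHead,
          Matrix.transpose_apply, Matrix.cons_val_succ] <;> nlinarith [hpa, hpc]
  apply le_antisymm
  · exact Nat.sInf_le mem9
  · apply le_csInf ⟨9, mem9⟩
    rintro m ⟨V, hV, hA⟩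
    exact lower_bound_s16 a c ha8 hc8 m V hV hA
end

section
/- There exist 2×2 integer doubly nonnegative matrices with integer cp-rank at least 9; for example A = [[8,1],[1,8]]. -/
open Matrix Finset

lemma count_ge_five {m : ℕ} (a : Fin m → ℤ) (ha : ∀ k, 0 ≤ a k)
    (hsum : ∑ k, a k * a k = 8) (k0 : Fin m) (hk0 : a k0 = 1) :
    5 ≤ (univ.filter (fun k => a k ≠ 0)).card := by
  have hle2 : ∀ k, a k ≤ 2 := by
    intro k
    by_contra h
    push_neg at h
    have hle : a k * a k ≤ 8 := by
      rw [← hsum]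
      exact Finset.single_le_sum (f := fun k => a k * a k)
        (fun i _ => mul_nonneg (ha i) (ha i)) (mem_univ k)
    nlinarith
  have hsum' : ∑ k, ((4:ℤ) * (if a k = 2 then 1 else 0) + (if a k = 1 then 1 else 0)) = 8 := by
    rw [← hsum]
    apply Finset.sum_congr rfl
    intro k _
    have h0 := ha k
    have h2 := hle2 k
    interval_cases (a k) <;> norm_num
  rw [Finset.sum_add_distrib, ← Finset.mul_sum, Finset.sum_boole, Finset.sum_boole] at hsum'
  set n2 := (univ.filter (fun k => a k = 2)).card with hn2
  set n1 := (univ.filter (fun k => a k = 1)).card with hn1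
  have hcard : (univ.filter (fun k => a k ≠ 0)) =
      (univ.filter (fun k => a k = 2)) ∪ (univ.filter (fun k => a k = 1)) := by
    ext k
    have h0 := ha k
    have h2 := hle2 k
    simp only [mem_filter, mem_union, mem_univ, true_and]
    omega
  have hdisj : Disjoint (univ.filter (fun k => a k = 2)) (univ.filter (fun k => a k = 1)) := by
    rw [Finset.disjoint_left]
    intro k hk hk'
    simp only [mem_filter] at hk hk'
    omega
  rw [hcard, Finset.card_union_of_disjoint hdisj]
  have hn1pos : 1 ≤ n1 := by
    rw [hn1]
    exact Finset.card_pos.mpr ⟨k0, by simp [hk0]⟩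
  have h48 : 4 * n2 + n1 = 8 := by exact_mod_cast hsum'
  omega

theorem exists_cp_rank_ge_nine :
    ∃ A : Matrix (Fin 2) (Fin 2) ℤ,
      (∀ i j, 0 ≤ A i j) ∧ A = Aᵀ ∧ (A 0 1) ^ 2 ≤ A 0 0 * A 1 1 ∧
      9 ≤ intCpRank A ∧ A = !![8, 1; 1, 8] := by
  refine ⟨!![8, 1; 1, 8], ?_, ?_, ?_, ?_, rfl⟩
  · intro i j; fin_cases i <;> fin_cases j <;> norm_num
  · ext i j; fin_cases i <;> fin_cases j <;> norm_num
  · norm_num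
  · have hmem : 9 ∈ {m : ℕ | ∃ V : Matrix (Fin 2) (Fin m) ℤ,
        (∀ i j, 0 ≤ V i j) ∧ !![8, 1; 1, 8] = V * Vᵀ} := by
      refine ⟨!![1,2,1,1,1,0,0,0,0; 1,0,0,0,0,2,1,1,1], ?_, ?_⟩
      · intro i j; fin_cases i <;> fin_cases j <;> norm_num
      · decide
    apply le_csInf ⟨9, hmem⟩
    rintro m ⟨V, hV, hA⟩
    have h00 : ∑ k, V 0 k * V 0 k = 8 := by
      have := congrFun (congrFun hA 0) 0
      simpa [Matrix.mul_apply] using this.symm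
    have h01 : ∑ k, V 0 k * V 1 k = 1 := by
      have := congrFun (congrFun hA 0) 1
      simpa [Matrix.mul_apply] using this.symm
    have h11 : ∑ k, V 1 k * V 1 k = 8 := by
      have := congrFun (congrFun hA 1) 1
      simpa [Matrix.mul_apply] using this.symm
    have hne : ∑ k, V 0 k * V 1 k ≠ 0 := by rw [h01]; norm_num
    obtain ⟨k0, -, hk0ne⟩ := Finset.exists_ne_zero_of_sum_ne_zero hne
    have htn : ∀ k, 0 ≤ V 0 k * V 1 k := fun k => mul_nonneg (hV 0 k) (hV 1 k)
    have hsplit : V 0 k0 * V 1 k0 + ∑ k ∈ univ.erase k0, V 0 k * V 1 k = 1 :=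
      (Finset.add_sum_erase univ (fun k => V 0 k * V 1 k) (mem_univ k0)).trans h01
    have hpos : 1 ≤ V 0 k0 * V 1 k0 := lt_of_le_of_ne (htn k0) (Ne.symm hk0ne)
    have hrge : 0 ≤ ∑ k ∈ univ.erase k0, V 0 k * V 1 k :=
      Finset.sum_nonneg fun k _ => htn k
    have hk0prod : V 0 k0 * V 1 k0 = 1 := by linarith
    have hrest : ∑ k ∈ univ.erase k0, V 0 k * V 1 k = 0 := by linarith
    have hzero : ∀ k ∈ univ.erase k0, V 0 k * V 1 k = 0 :=
      (Finset.sum_eq_zero_iff_of_nonneg fun k _ => htn k).mp hrest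
    have hk0v : V 0 k0 = 1 ∧ V 1 k0 = 1 := by
      rcases Int.mul_eq_one_iff_eq_one_or_neg_one.mp hk0prod with ⟨h1, h2⟩ | ⟨h1, h2⟩
      · exact ⟨h1, h2⟩
      · exfalso; have := hV 0 k0; omega
    have h5a := count_ge_five (fun k => V 0 k) (fun k => hV 0 k) h00 k0 hk0v.1
    have h5b := count_ge_five (fun k => V 1 k) (fun k => hV 1 k) h11 k0 hk0v.2
    set Sa := univ.filter (fun k => V 0 k ≠ 0) with hSa
    set Sb := univ.filter (fun k => V 1 k ≠ 0) with hSb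
    have hinter : Sa ∩ Sb = {k0} := by
      ext k
      simp only [hSa, hSb, Finset.mem_inter, Finset.mem_filter, Finset.mem_univ, true_and,
        Finset.mem_singleton]
      constructor
      · rintro ⟨h1, h2⟩
        by_contra hne'
        have h0 := hzero k (Finset.mem_erase.mpr ⟨hne', mem_univ k⟩)
        rcases mul_eq_zero.mp h0 with h | h
        · exact h1 h
        · exact h2 h
      · rintro rfl
        constructor <;> simp [hk0v.1, hk0v.2]
    have hcu : (Sa ∪ Sb).card ≤ m := by
      have := Finset.card_le_card (Finset.subset_univ (Sa ∪ Sb))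
      simpa using this
    have := Finset.card_inter_add_card_union Sa Sb
    rw [hinter] at this
    simp only [Finset.card_singleton] at this
    omega
end

section
/- Let B = [[a,2],[2,c]] with integers c ≥ a ≥ 2 and ac ≥ 4. Then the integer cp-rank of B is at most 8. -/
def Q2 (b c t y z : ℤ) : ℤ := b*y^2 + c*z^2 + 2*t*y*z
set_option maxHeartbeats 1000000

def Q3 (a b c r s t x y z : ℤ) : ℤ :=
  a*x^2 + b*y^2 + c*z^2 + 2*(r*x*y + s*x*z + t*y*z)

def D3 (a b c r s t : ℤ) : ℤ :=
  a*b*c + 2*r*s*t - a*t^2 - b*s^2 - c*r^2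

theorem abs_sq_le {x k : ℤ} (h : |x| ≤ k) : x^2 ≤ k^2 := by
  have := pow_le_pow_left₀ (abs_nonneg x) h 2
  rwa [sq_abs] at this

theorem two_abs_sq_le {x k : ℤ} (h : 2*|x| ≤ k) : 4*x^2 ≤ k^2 := by
  have := pow_le_pow_left₀ (by positivity : (0:ℤ) ≤ 2*|x|) h 2
  rw [mul_pow, sq_abs] at this; linarith

theorem core3 (a b c r s t : ℤ) (h2 : 2 ≤ a) (hab : a ≤ b) (hbc : b ≤ c)
    (hr : 2*|r| ≤ a) (hs : 2*|s| ≤ a) (ht : 2*|t| ≤ b)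
    (hdet : D3 a b c r s t = 1) : False := by
  have ha0 : (0:ℤ) ≤ a := by linarith
  have hb0 : (0:ℤ) ≤ b := by linarith
  have hc0 : (0:ℤ) ≤ c := by linarith
  have h4 : 4 ≤ a*b := by nlinarith
  have hr2 : 4*r^2 ≤ a^2 := two_abs_sq_le hr
  have hs2 : 4*s^2 ≤ a^2 := two_abs_sq_le hs
  have ht2 : 4*t^2 ≤ b^2 := two_abs_sq_le ht
  have habs : 8*|r*s*t| ≤ a*a*b := by
    have e2 : 0 ≤ 2*|s| := by positivity
    have e3 : 0 ≤ 2*|t| := by positivity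
    have h1 : (2*|r|)*(2*|s|) ≤ a*a := mul_le_mul hr hs e2 ha0
    have h2' : ((2*|r|)*(2*|s|))*(2*|t|) ≤ (a*a)*b :=
      mul_le_mul h1 ht e3 (by positivity)
    calc 8*|r*s*t| = ((2*|r|)*(2*|s|))*(2*|t|) := by rw [abs_mul, abs_mul]; ring
      _ ≤ a*a*b := h2'
  have hrstL : -(a*a*b) ≤ 8*(r*s*t) := by
    have := neg_abs_le (r*s*t); linarith
  have hkey : c*(a*b - r^2) = 1 + (a*t^2 - 2*(r*s*t) + b*s^2) := by
    simp only [D3] at hdet; linear_combination hdet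
  have haab : a*a ≤ a*b := mul_le_mul_of_nonneg_left hab ha0
  have e0 : 0 ≤ c * (a*b - 4*r^2) := mul_nonneg hc0 (by nlinarith)
  have e1 : a*(4*t^2) ≤ a*(b^2) := mul_le_mul_of_nonneg_left ht2 ha0
  have e2 : b*(4*s^2) ≤ b*(a^2) := mul_le_mul_of_nonneg_left hs2 hb0
  have hineq : 3*(a*b*c) ≤ 4 + a*b^2 + 2*(a^2*b) := by nlinarith [hkey, e0, e1, e2, hrstL]
  have hca : c ≤ a := by
    have e3 : 0 ≤ (a*b) * (c - b) := mul_nonneg (mul_nonneg ha0 hb0) (by linarith)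
    nlinarith [hineq, h4, e3]
  have hba : b = a := by omega
  have hca' : c = a := by omega
  rw [hba] at ht
  have hD : a^3 + 2*(r*s*t) - a*(r^2+s^2+t^2) = 1 := by
    simp only [D3] at hdet; rw [hba, hca'] at hdet; linear_combination hdet
  rcases Int.even_or_odd a with ⟨k, hk⟩ | ⟨k, hk⟩
  · have h2dvd : (2:ℤ) ∣ 1 := ⟨4*k^3 + r*s*t - k*(r^2+s^2+t^2), by
      rw [← hD, hk]; ring⟩
    norm_num at h2dvd
  · have hk1 : 1 ≤ k := by omega
    rw [hk] at hr hs ht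
    have hrk : |r| ≤ k := by by_contra h; push_neg at h; linarith
    have hsk : |s| ≤ k := by by_contra h; push_neg at h; linarith
    have htk : |t| ≤ k := by by_contra h; push_neg at h; linarith
    have hk0 : (0:ℤ) ≤ k := by linarith
    have hr2' : r^2 ≤ k^2 := abs_sq_le hrk
    have hs2' : s^2 ≤ k^2 := abs_sq_le hsk
    have ht2' : t^2 ≤ k^2 := abs_sq_le htk
    have habs2 : |r*s*t| ≤ k*k*k := by
      have h1 : (|r|)*(|s|) ≤ k*k := mul_le_mul hrk hsk (abs_nonneg s) hk0
      have h2' : ((|r|)*(|s|))*(|t|) ≤ (k*k)*k :=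
        mul_le_mul h1 htk (abs_nonneg t) (by positivity)
      calc |r*s*t| = ((|r|)*(|s|))*(|t|) := by rw [abs_mul, abs_mul]
        _ ≤ k*k*k := h2'
    have hrst2 : -(k*k*k) ≤ r*s*t := by
      have := neg_abs_le (r*s*t); linarith
    have esum : r^2+s^2+t^2 ≤ 3*k^2 := by linarith
    have e1 : a*(r^2+s^2+t^2) ≤ a*(3*k^2) :=
      mul_le_mul_of_nonneg_left esum ha0
    have key : (1:ℤ) ≥ a^3 - 2*(k*k*k) - a*(3*k^2) := by linarith [hD]
    rw [hk] at key
    nlinarith [key, hk1]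

/-- binary: pos def det 1 represents only sums of two squares -/
theorem binary_rep : ∀ N : ℕ, ∀ b c t : ℤ, (b + c).toNat ≤ N →
    (∀ y z : ℤ, ¬(y = 0 ∧ z = 0) → 0 < Q2 b c t y z) →
    b*c - t^2 = 1 → ∀ m : ℤ, (∃ y z, Q2 b c t y z = m) →
    ∃ Y Z : ℤ, Y^2 + Z^2 = m := by
  intro N
  induction N using Nat.strong_induction_on with
  | _ N IH =>
    intro b c t hN hpos hdet m hrep
    have hb : 0 < b := by simpa [Q2] using hpos 1 0 (by simp)
    have hc : 0 < c := by simpa [Q2] using hpos 0 1 (by simp)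
    rcases lt_or_ge b (2*|t|) with hmb | hb2
    ·
      rcases abs_cases t with ⟨h1, h2⟩ | ⟨h1, h2⟩
      · -- t ≥ 0, |t| = t, k = -1 : c' = c - 2t + b, t' = t - b
        have hQ : ∀ y z : ℤ, Q2 b (c - 2*t + b) (t - b) y z = Q2 b c t (y - z) z := by
          intro y z; simp only [Q2]; ring
        have hpos' : ∀ y z : ℤ, ¬(y = 0 ∧ z = 0) → 0 < Q2 b (c - 2*t + b) (t - b) y z := by
          intro y z h; rw [hQ]; apply hpos; rintro ⟨e1, e2⟩; exact h ⟨by omega, e2⟩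
        have hc' : 0 < c - 2*t + b := by simpa [Q2] using hpos' 0 1 (by simp)
        refine IH (b + (c - 2*t + b)).toNat (by omega) b (c - 2*t + b) (t - b) le_rfl hpos'
          (by linear_combination hdet) m ?_
        obtain ⟨y, z, hyz⟩ := hrep
        exact ⟨y + z, z, by rw [hQ]; simpa using hyz⟩
      · -- t < 0, |t| = -t, k = 1 : c' = c + 2t + b, t' = t + b
        have hQ : ∀ y z : ℤ, Q2 b (c + 2*t + b) (t + b) y z = Q2 b c t (y + z) z := by
          intro y z; simp only [Q2]; ring
        have hpos' : ∀ y z : ℤ, ¬(y = 0 ∧ z = 0) → 0 < Q2 b (c + 2*t + b) (t + b) y z := by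
          intro y z h; rw [hQ]; apply hpos; rintro ⟨e1, e2⟩; exact h ⟨by omega, e2⟩
        have hc' : 0 < c + 2*t + b := by simpa [Q2] using hpos' 0 1 (by simp)
        refine IH (b + (c + 2*t + b)).toNat (by omega) b (c + 2*t + b) (t + b) le_rfl hpos'
          (by linear_combination hdet) m ?_
        obtain ⟨y, z, hyz⟩ := hrep
        exact ⟨y - z, z, by rw [hQ]; simpa using hyz⟩
    · rcases lt_or_ge c (2*|t|) with hmc | hc2
      · rcases abs_cases t with ⟨h1, h2⟩ | ⟨h1, h2⟩
        · -- k = -1 : b' = b - 2t + c, t' = t - c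
          have hQ : ∀ y z : ℤ, Q2 (b - 2*t + c) c (t - c) y z = Q2 b c t y (z - y) := by
            intro y z; simp only [Q2]; ring
          have hpos' : ∀ y z : ℤ, ¬(y = 0 ∧ z = 0) → 0 < Q2 (b - 2*t + c) c (t - c) y z := by
            intro y z h; rw [hQ]; apply hpos; rintro ⟨e1, e2⟩; exact h ⟨e1, by omega⟩
          have hb' : 0 < b - 2*t + c := by simpa [Q2] using hpos' 1 0 (by simp)
          refine IH ((b - 2*t + c) + c).toNat (by omega) (b - 2*t + c) c (t - c) le_rfl hpos'
            (by linear_combination hdet) m ?_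
          obtain ⟨y, z, hyz⟩ := hrep
          exact ⟨y, z + y, by rw [hQ]; simpa using hyz⟩
        · have hQ : ∀ y z : ℤ, Q2 (b + 2*t + c) c (t + c) y z = Q2 b c t y (z + y) := by
            intro y z; simp only [Q2]; ring
          have hpos' : ∀ y z : ℤ, ¬(y = 0 ∧ z = 0) → 0 < Q2 (b + 2*t + c) c (t + c) y z := by
            intro y z h; rw [hQ]; apply hpos; rintro ⟨e1, e2⟩; exact h ⟨e1, by omega⟩
          have hb' : 0 < b + 2*t + c := by simpa [Q2] using hpos' 1 0 (by simp)
          refine IH ((b + 2*t + c) + c).toNat (by omega) (b + 2*t + c) c (t + c) le_rfl hpos'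
            (by linear_combination hdet) m ?_
          obtain ⟨y, z, hyz⟩ := hrep
          exact ⟨y, z - y, by rw [hQ]; simpa using hyz⟩
      · -- terminal: 2|t| ≤ b, 2|t| ≤ c ⇒ t = 0, b = c = 1
        have ht0 : t = 0 := by nlinarith [abs_nonneg t, sq_abs t, sq_nonneg t]
        have hb1 : b = 1 ∧ c = 1 := by constructor <;> nlinarith [ht0]
        obtain ⟨y, z, hyz⟩ := hrep
        exact ⟨y, z, by rw [← hyz, hb1.1, hb1.2, ht0, Q2]; ring⟩



theorem sorted3 (a b c r s t : ℤ) (hab : a ≤ b) (hbc : b ≤ c)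
    (hr : 2*|r| ≤ a) (hs : 2*|s| ≤ a) (ht : 2*|t| ≤ b)
    (hpos : ∀ x y z : ℤ, ¬(x = 0 ∧ y = 0 ∧ z = 0) → 0 < Q3 a b c r s t x y z)
    (hdet : D3 a b c r s t = 1) (m : ℤ) (hrep : ∃ x y z, Q3 a b c r s t x y z = m) :
    ∃ X Y Z : ℤ, X^2 + Y^2 + Z^2 = m := by
  have ha : 0 < a := by simpa [Q3] using hpos 1 0 0 (by simp)
  rcases lt_or_ge a 2 with ha1 | ha2
  · have ha1' : a = 1 := by omega
    subst ha1'
    have hr0 : r = 0 := by rw [Int.abs_eq_natAbs] at hr; omega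
    have hs0 : s = 0 := by rw [Int.abs_eq_natAbs] at hs; omega
    subst hr0; subst hs0
    have hpos2 : ∀ y z : ℤ, ¬(y = 0 ∧ z = 0) → 0 < Q2 b c t y z := by
      intro y z h
      have e : Q3 1 b c 0 0 t 0 y z = Q2 b c t y z := by simp only [Q3, Q2]; ring
      rw [← e]; exact hpos 0 y z (by tauto)
    have hdet2 : b*c - t^2 = 1 := by simp only [D3] at hdet; linear_combination hdet
    obtain ⟨x, y, z, hx⟩ := hrep
    have hx2 : Q2 b c t y z = m - x^2 := by
      simp only [Q3] at hx; simp only [Q2]; linear_combination hx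
    obtain ⟨Y, Z, hYZ⟩ := binary_rep (b+c).toNat b c t le_rfl hpos2 hdet2 (m - x^2) ⟨y, z, hx2⟩
    exact ⟨x, Y, Z, by linarith⟩
  · exact absurd hdet (fun h => core3 a b c r s t ha2 hab hbc hr hs ht h)


theorem ter_aux : ∀ N : ℕ, ∀ a b c r s t m : ℤ, (a + b + c).toNat ≤ N →
    (∀ x y z : ℤ, ¬(x = 0 ∧ y = 0 ∧ z = 0) → 0 < Q3 a b c r s t x y z) →
    D3 a b c r s t = 1 → (∃ x y z, Q3 a b c r s t x y z = m) →
    ∃ X Y Z : ℤ, X^2 + Y^2 + Z^2 = m := by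
  intro N
  induction N using Nat.strong_induction_on with
  | _ N IH =>
    intro a b c r s t m hN hpos hdet hrep
    have ha : 0 < a := by simpa [Q3] using hpos 1 0 0 (by simp)
    have hb : 0 < b := by simpa [Q3] using hpos 0 1 0 (by simp)
    have hc : 0 < c := by simpa [Q3] using hpos 0 0 1 (by simp)
    rcases lt_or_ge a (2*|r|) with hcond | h1
    · rcases abs_cases r with ⟨habs, hsgn⟩ | ⟨habs, hsgn⟩ <;> rw [habs] at hcond
      · -- k = -1
        have hQ : ∀ x y z : ℤ, Q3 (a) (b - 2*r + a) (c) (r - a) (s) (t - s) x y z = Q3 a b c r s t (x - y) (y) (z) := by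
          intro x y z; simp only [Q3]; ring
        have hpos' : ∀ x y z : ℤ, ¬(x = 0 ∧ y = 0 ∧ z = 0) → 0 < Q3 (a) (b - 2*r + a) (c) (r - a) (s) (t - s) x y z := by
          intro x y z h; rw [hQ]; apply hpos; rintro ⟨e1, e2, e3⟩
          exact h ⟨by omega, by omega, by omega⟩
        have hdec : 0 < Q3 (a) (b - 2*r + a) (c) (r - a) (s) (t - s) 0 1 0 := hpos' 0 1 0 (by simp)
        simp only [Q3] at hdec; ring_nf at hdec
        refine IH ((a) + (b - 2*r + a) + (c)).toNat (by omega) (a) (b - 2*r + a) (c) (r - a) (s) (t - s) m le_rfl hpos'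
          (by simp only [D3] at hdet ⊢; linear_combination hdet) ?_
        obtain ⟨x, y, z, hx⟩ := hrep
        exact ⟨x + y, y, z, by rw [hQ]; simpa using hx⟩
      · -- k = +1
        have hQ : ∀ x y z : ℤ, Q3 (a) (b + 2*r + a) (c) (r + a) (s) (t + s) x y z = Q3 a b c r s t (x + y) (y) (z) := by
          intro x y z; simp only [Q3]; ring
        have hpos' : ∀ x y z : ℤ, ¬(x = 0 ∧ y = 0 ∧ z = 0) → 0 < Q3 (a) (b + 2*r + a) (c) (r + a) (s) (t + s) x y z := by
          intro x y z h; rw [hQ]; apply hpos; rintro ⟨e1, e2, e3⟩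
          exact h ⟨by omega, by omega, by omega⟩
        have hdec : 0 < Q3 (a) (b + 2*r + a) (c) (r + a) (s) (t + s) 0 1 0 := hpos' 0 1 0 (by simp)
        simp only [Q3] at hdec; ring_nf at hdec
        refine IH ((a) + (b + 2*r + a) + (c)).toNat (by omega) (a) (b + 2*r + a) (c) (r + a) (s) (t + s) m le_rfl hpos'
          (by simp only [D3] at hdet ⊢; linear_combination hdet) ?_
        obtain ⟨x, y, z, hx⟩ := hrep
        exact ⟨x - y, y, z, by rw [hQ]; simpa using hx⟩
    rcases lt_or_ge b (2*|r|) with hcond | h2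
    · rcases abs_cases r with ⟨habs, hsgn⟩ | ⟨habs, hsgn⟩ <;> rw [habs] at hcond
      · -- k = -1
        have hQ : ∀ x y z : ℤ, Q3 (a - 2*r + b) (b) (c) (r - b) (s - t) (t) x y z = Q3 a b c r s t (x) (y - x) (z) := by
          intro x y z; simp only [Q3]; ring
        have hpos' : ∀ x y z : ℤ, ¬(x = 0 ∧ y = 0 ∧ z = 0) → 0 < Q3 (a - 2*r + b) (b) (c) (r - b) (s - t) (t) x y z := by
          intro x y z h; rw [hQ]; apply hpos; rintro ⟨e1, e2, e3⟩
          exact h ⟨by omega, by omega, by omega⟩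
        have hdec : 0 < Q3 (a - 2*r + b) (b) (c) (r - b) (s - t) (t) 1 0 0 := hpos' 1 0 0 (by simp)
        simp only [Q3] at hdec; ring_nf at hdec
        refine IH ((a - 2*r + b) + (b) + (c)).toNat (by omega) (a - 2*r + b) (b) (c) (r - b) (s - t) (t) m le_rfl hpos'
          (by simp only [D3] at hdet ⊢; linear_combination hdet) ?_
        obtain ⟨x, y, z, hx⟩ := hrep
        exact ⟨x, y + x, z, by rw [hQ]; simpa using hx⟩
      · -- k = +1
        have hQ : ∀ x y z : ℤ, Q3 (a + 2*r + b) (b) (c) (r + b) (s + t) (t) x y z = Q3 a b c r s t (x) (y + x) (z) := by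
          intro x y z; simp only [Q3]; ring
        have hpos' : ∀ x y z : ℤ, ¬(x = 0 ∧ y = 0 ∧ z = 0) → 0 < Q3 (a + 2*r + b) (b) (c) (r + b) (s + t) (t) x y z := by
          intro x y z h; rw [hQ]; apply hpos; rintro ⟨e1, e2, e3⟩
          exact h ⟨by omega, by omega, by omega⟩
        have hdec : 0 < Q3 (a + 2*r + b) (b) (c) (r + b) (s + t) (t) 1 0 0 := hpos' 1 0 0 (by simp)
        simp only [Q3] at hdec; ring_nf at hdec
        refine IH ((a + 2*r + b) + (b) + (c)).toNat (by omega) (a + 2*r + b) (b) (c) (r + b) (s + t) (t) m le_rfl hpos'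
          (by simp only [D3] at hdet ⊢; linear_combination hdet) ?_
        obtain ⟨x, y, z, hx⟩ := hrep
        exact ⟨x, y - x, z, by rw [hQ]; simpa using hx⟩
    rcases lt_or_ge a (2*|s|) with hcond | h3
    · rcases abs_cases s with ⟨habs, hsgn⟩ | ⟨habs, hsgn⟩ <;> rw [habs] at hcond
      · -- k = -1
        have hQ : ∀ x y z : ℤ, Q3 (a) (b) (c - 2*s + a) (r) (s - a) (t - r) x y z = Q3 a b c r s t (x - z) (y) (z) := by
          intro x y z; simp only [Q3]; ring
        have hpos' : ∀ x y z : ℤ, ¬(x = 0 ∧ y = 0 ∧ z = 0) → 0 < Q3 (a) (b) (c - 2*s + a) (r) (s - a) (t - r) x y z := by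
          intro x y z h; rw [hQ]; apply hpos; rintro ⟨e1, e2, e3⟩
          exact h ⟨by omega, by omega, by omega⟩
        have hdec : 0 < Q3 (a) (b) (c - 2*s + a) (r) (s - a) (t - r) 0 0 1 := hpos' 0 0 1 (by simp)
        simp only [Q3] at hdec; ring_nf at hdec
        refine IH ((a) + (b) + (c - 2*s + a)).toNat (by omega) (a) (b) (c - 2*s + a) (r) (s - a) (t - r) m le_rfl hpos'
          (by simp only [D3] at hdet ⊢; linear_combination hdet) ?_
        obtain ⟨x, y, z, hx⟩ := hrep
        exact ⟨x + z, y, z, by rw [hQ]; simpa using hx⟩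
      · -- k = +1
        have hQ : ∀ x y z : ℤ, Q3 (a) (b) (c + 2*s + a) (r) (s + a) (t + r) x y z = Q3 a b c r s t (x + z) (y) (z) := by
          intro x y z; simp only [Q3]; ring
        have hpos' : ∀ x y z : ℤ, ¬(x = 0 ∧ y = 0 ∧ z = 0) → 0 < Q3 (a) (b) (c + 2*s + a) (r) (s + a) (t + r) x y z := by
          intro x y z h; rw [hQ]; apply hpos; rintro ⟨e1, e2, e3⟩
          exact h ⟨by omega, by omega, by omega⟩
        have hdec : 0 < Q3 (a) (b) (c + 2*s + a) (r) (s + a) (t + r) 0 0 1 := hpos' 0 0 1 (by simp)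
        simp only [Q3] at hdec; ring_nf at hdec
        refine IH ((a) + (b) + (c + 2*s + a)).toNat (by omega) (a) (b) (c + 2*s + a) (r) (s + a) (t + r) m le_rfl hpos'
          (by simp only [D3] at hdet ⊢; linear_combination hdet) ?_
        obtain ⟨x, y, z, hx⟩ := hrep
        exact ⟨x - z, y, z, by rw [hQ]; simpa using hx⟩
    rcases lt_or_ge c (2*|s|) with hcond | h4
    · rcases abs_cases s with ⟨habs, hsgn⟩ | ⟨habs, hsgn⟩ <;> rw [habs] at hcond
      · -- k = -1
        have hQ : ∀ x y z : ℤ, Q3 (a - 2*s + c) (b) (c) (r - t) (s - c) (t) x y z = Q3 a b c r s t (x) (y) (z - x) := by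
          intro x y z; simp only [Q3]; ring
        have hpos' : ∀ x y z : ℤ, ¬(x = 0 ∧ y = 0 ∧ z = 0) → 0 < Q3 (a - 2*s + c) (b) (c) (r - t) (s - c) (t) x y z := by
          intro x y z h; rw [hQ]; apply hpos; rintro ⟨e1, e2, e3⟩
          exact h ⟨by omega, by omega, by omega⟩
        have hdec : 0 < Q3 (a - 2*s + c) (b) (c) (r - t) (s - c) (t) 1 0 0 := hpos' 1 0 0 (by simp)
        simp only [Q3] at hdec; ring_nf at hdec
        refine IH ((a - 2*s + c) + (b) + (c)).toNat (by omega) (a - 2*s + c) (b) (c) (r - t) (s - c) (t) m le_rfl hpos'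
          (by simp only [D3] at hdet ⊢; linear_combination hdet) ?_
        obtain ⟨x, y, z, hx⟩ := hrep
        exact ⟨x, y, z + x, by rw [hQ]; simpa using hx⟩
      · -- k = +1
        have hQ : ∀ x y z : ℤ, Q3 (a + 2*s + c) (b) (c) (r + t) (s + c) (t) x y z = Q3 a b c r s t (x) (y) (z + x) := by
          intro x y z; simp only [Q3]; ring
        have hpos' : ∀ x y z : ℤ, ¬(x = 0 ∧ y = 0 ∧ z = 0) → 0 < Q3 (a + 2*s + c) (b) (c) (r + t) (s + c) (t) x y z := by
          intro x y z h; rw [hQ]; apply hpos; rintro ⟨e1, e2, e3⟩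
          exact h ⟨by omega, by omega, by omega⟩
        have hdec : 0 < Q3 (a + 2*s + c) (b) (c) (r + t) (s + c) (t) 1 0 0 := hpos' 1 0 0 (by simp)
        simp only [Q3] at hdec; ring_nf at hdec
        refine IH ((a + 2*s + c) + (b) + (c)).toNat (by omega) (a + 2*s + c) (b) (c) (r + t) (s + c) (t) m le_rfl hpos'
          (by simp only [D3] at hdet ⊢; linear_combination hdet) ?_
        obtain ⟨x, y, z, hx⟩ := hrep
        exact ⟨x, y, z - x, by rw [hQ]; simpa using hx⟩
    rcases lt_or_ge b (2*|t|) with hcond | h5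
    · rcases abs_cases t with ⟨habs, hsgn⟩ | ⟨habs, hsgn⟩ <;> rw [habs] at hcond
      · -- k = -1
        have hQ : ∀ x y z : ℤ, Q3 (a) (b) (c - 2*t + b) (r) (s - r) (t - b) x y z = Q3 a b c r s t (x) (y - z) (z) := by
          intro x y z; simp only [Q3]; ring
        have hpos' : ∀ x y z : ℤ, ¬(x = 0 ∧ y = 0 ∧ z = 0) → 0 < Q3 (a) (b) (c - 2*t + b) (r) (s - r) (t - b) x y z := by
          intro x y z h; rw [hQ]; apply hpos; rintro ⟨e1, e2, e3⟩
          exact h ⟨by omega, by omega, by omega⟩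
        have hdec : 0 < Q3 (a) (b) (c - 2*t + b) (r) (s - r) (t - b) 0 0 1 := hpos' 0 0 1 (by simp)
        simp only [Q3] at hdec; ring_nf at hdec
        refine IH ((a) + (b) + (c - 2*t + b)).toNat (by omega) (a) (b) (c - 2*t + b) (r) (s - r) (t - b) m le_rfl hpos'
          (by simp only [D3] at hdet ⊢; linear_combination hdet) ?_
        obtain ⟨x, y, z, hx⟩ := hrep
        exact ⟨x, y + z, z, by rw [hQ]; simpa using hx⟩
      · -- k = +1
        have hQ : ∀ x y z : ℤ, Q3 (a) (b) (c + 2*t + b) (r) (s + r) (t + b) x y z = Q3 a b c r s t (x) (y + z) (z) := by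
          intro x y z; simp only [Q3]; ring
        have hpos' : ∀ x y z : ℤ, ¬(x = 0 ∧ y = 0 ∧ z = 0) → 0 < Q3 (a) (b) (c + 2*t + b) (r) (s + r) (t + b) x y z := by
          intro x y z h; rw [hQ]; apply hpos; rintro ⟨e1, e2, e3⟩
          exact h ⟨by omega, by omega, by omega⟩
        have hdec : 0 < Q3 (a) (b) (c + 2*t + b) (r) (s + r) (t + b) 0 0 1 := hpos' 0 0 1 (by simp)
        simp only [Q3] at hdec; ring_nf at hdec
        refine IH ((a) + (b) + (c + 2*t + b)).toNat (by omega) (a) (b) (c + 2*t + b) (r) (s + r) (t + b) m le_rfl hpos'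
          (by simp only [D3] at hdet ⊢; linear_combination hdet) ?_
        obtain ⟨x, y, z, hx⟩ := hrep
        exact ⟨x, y - z, z, by rw [hQ]; simpa using hx⟩
    rcases lt_or_ge c (2*|t|) with hcond | h6
    · rcases abs_cases t with ⟨habs, hsgn⟩ | ⟨habs, hsgn⟩ <;> rw [habs] at hcond
      · -- k = -1
        have hQ : ∀ x y z : ℤ, Q3 (a) (b - 2*t + c) (c) (r - s) (s) (t - c) x y z = Q3 a b c r s t (x) (y) (z - y) := by
          intro x y z; simp only [Q3]; ring
        have hpos' : ∀ x y z : ℤ, ¬(x = 0 ∧ y = 0 ∧ z = 0) → 0 < Q3 (a) (b - 2*t + c) (c) (r - s) (s) (t - c) x y z := by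
          intro x y z h; rw [hQ]; apply hpos; rintro ⟨e1, e2, e3⟩
          exact h ⟨by omega, by omega, by omega⟩
        have hdec : 0 < Q3 (a) (b - 2*t + c) (c) (r - s) (s) (t - c) 0 1 0 := hpos' 0 1 0 (by simp)
        simp only [Q3] at hdec; ring_nf at hdec
        refine IH ((a) + (b - 2*t + c) + (c)).toNat (by omega) (a) (b - 2*t + c) (c) (r - s) (s) (t - c) m le_rfl hpos'
          (by simp only [D3] at hdet ⊢; linear_combination hdet) ?_
        obtain ⟨x, y, z, hx⟩ := hrep
        exact ⟨x, y, z + y, by rw [hQ]; simpa using hx⟩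
      · -- k = +1
        have hQ : ∀ x y z : ℤ, Q3 (a) (b + 2*t + c) (c) (r + s) (s) (t + c) x y z = Q3 a b c r s t (x) (y) (z + y) := by
          intro x y z; simp only [Q3]; ring
        have hpos' : ∀ x y z : ℤ, ¬(x = 0 ∧ y = 0 ∧ z = 0) → 0 < Q3 (a) (b + 2*t + c) (c) (r + s) (s) (t + c) x y z := by
          intro x y z h; rw [hQ]; apply hpos; rintro ⟨e1, e2, e3⟩
          exact h ⟨by omega, by omega, by omega⟩
        have hdec : 0 < Q3 (a) (b + 2*t + c) (c) (r + s) (s) (t + c) 0 1 0 := hpos' 0 1 0 (by simp)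
        simp only [Q3] at hdec; ring_nf at hdec
        refine IH ((a) + (b + 2*t + c) + (c)).toNat (by omega) (a) (b + 2*t + c) (c) (r + s) (s) (t + c) m le_rfl hpos'
          (by simp only [D3] at hdet ⊢; linear_combination hdet) ?_
        obtain ⟨x, y, z, hx⟩ := hrep
        exact ⟨x, y, z - y, by rw [hQ]; simpa using hx⟩
    rcases le_total a b with hab | hab
    · rcases le_total b c with hbc | hbc
      · -- a ≤ b ≤ c
        refine sorted3 (a) (b) (c) (r) (s) (t) hab hbc h1 h3 h5 ?_
          (by simp only [D3] at hdet ⊢; linear_combination hdet) m ?_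
        · intro x y z h
          have e : Q3 (a) (b) (c) (r) (s) (t) x y z = Q3 a b c r s t x y z := rfl
          rw [e]; exact hpos x y z (by tauto)
        · obtain ⟨x, y, z, hx⟩ := hrep
          refine ⟨x, y, z, ?_⟩
          have e : Q3 (a) (b) (c) (r) (s) (t) (x) (y) (z) = Q3 a b c r s t x y z := rfl
          rw [e]; exact hx
      · rcases le_total a c with hac | hac
        · -- a ≤ c ≤ b
          refine sorted3 (a) (c) (b) (s) (r) (t) hac hbc h3 h1 h6 ?_
            (by simp only [D3] at hdet ⊢; linear_combination hdet) m ?_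
          · intro x y z h
            have e : Q3 (a) (c) (b) (s) (r) (t) x y z = Q3 a b c r s t x z y := by
              simp only [Q3]; ring
            rw [e]; exact hpos x z y (by tauto)
          · obtain ⟨x, y, z, hx⟩ := hrep
            refine ⟨x, z, y, ?_⟩
            have e : Q3 (a) (c) (b) (s) (r) (t) (x) (z) (y) = Q3 a b c r s t x y z := by
              simp only [Q3]; ring
            rw [e]; exact hx
        · -- c ≤ a ≤ b
          refine sorted3 (c) (a) (b) (s) (t) (r) hac hab h4 h6 h1 ?_
            (by simp only [D3] at hdet ⊢; linear_combination hdet) m ?_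
          · intro x y z h
            have e : Q3 (c) (a) (b) (s) (t) (r) x y z = Q3 a b c r s t y z x := by
              simp only [Q3]; ring
            rw [e]; exact hpos y z x (by tauto)
          · obtain ⟨x, y, z, hx⟩ := hrep
            refine ⟨z, x, y, ?_⟩
            have e : Q3 (c) (a) (b) (s) (t) (r) (z) (x) (y) = Q3 a b c r s t x y z := by
              simp only [Q3]; ring
            rw [e]; exact hx
    · rcases le_total a c with hac | hac
      · -- b ≤ a ≤ c
        refine sorted3 (b) (a) (c) (r) (t) (s) hab hac h2 h5 h3 ?_
          (by simp only [D3] at hdet ⊢; linear_combination hdet) m ?_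
        · intro x y z h
          have e : Q3 (b) (a) (c) (r) (t) (s) x y z = Q3 a b c r s t y x z := by
            simp only [Q3]; ring
          rw [e]; exact hpos y x z (by tauto)
        · obtain ⟨x, y, z, hx⟩ := hrep
          refine ⟨y, x, z, ?_⟩
          have e : Q3 (b) (a) (c) (r) (t) (s) (y) (x) (z) = Q3 a b c r s t x y z := by
            simp only [Q3]; ring
          rw [e]; exact hx
      · rcases le_total b c with hbc | hbc
        · -- b ≤ c ≤ a
          refine sorted3 (b) (c) (a) (t) (r) (s) hbc hac h5 h2 h4 ?_
            (by simp only [D3] at hdet ⊢; linear_combination hdet) m ?_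
          · intro x y z h
            have e : Q3 (b) (c) (a) (t) (r) (s) x y z = Q3 a b c r s t z x y := by
              simp only [Q3]; ring
            rw [e]; exact hpos z x y (by tauto)
          · obtain ⟨x, y, z, hx⟩ := hrep
            refine ⟨y, z, x, ?_⟩
            have e : Q3 (b) (c) (a) (t) (r) (s) (y) (z) (x) = Q3 a b c r s t x y z := by
              simp only [Q3]; ring
            rw [e]; exact hx
        · -- c ≤ b ≤ a
          refine sorted3 (c) (b) (a) (t) (s) (r) hbc hab h6 h4 h2 ?_
            (by simp only [D3] at hdet ⊢; linear_combination hdet) m ?_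
          · intro x y z h
            have e : Q3 (c) (b) (a) (t) (s) (r) x y z = Q3 a b c r s t z y x := by
              simp only [Q3]; ring
            rw [e]; exact hpos z y x (by tauto)
          · obtain ⟨x, y, z, hx⟩ := hrep
            refine ⟨z, y, x, ?_⟩
            have e : Q3 (c) (b) (a) (t) (s) (r) (z) (y) (x) = Q3 a b c r s t x y z := by
              simp only [Q3]; ring
            rw [e]; exact hx

/-- Main Part-2 theorem: a positive-definite integral ternary form of determinant 1
represents only sums of three squares. -/
theorem ternary_rep (a b c r s t : ℤ)
    (hpos : ∀ x y z : ℤ, ¬(x = 0 ∧ y = 0 ∧ z = 0) → 0 < Q3 a b c r s t x y z)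
    (hdet : D3 a b c r s t = 1) (m : ℤ) (hrep : ∃ x y z, Q3 a b c r s t x y z = m) :
    ∃ X Y Z : ℤ, X^2 + Y^2 + Z^2 = m :=
  ter_aux (a+b+c).toNat a b c r s t m le_rfl hpos hdet hrep

open jacobiSym in
/-- existence of the auxiliary prime -/
theorem exists_special_prime (nb : ℕ) (hodd : nb % 2 = 1) (h3 : 3 ≤ nb)
    (ε : ℕ) (hε : ε = 1 ∨ ε = 3) :
    ∃ p : ℕ, p.Prime ∧ 8*nb < p ∧ p % 8 = ε ∧ nb ∣ p + 1 := by
  have hco : Nat.Coprime 8 nb := by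
    have h2 : Nat.Coprime 2 nb := Nat.coprime_two_left.mpr (Nat.odd_iff.mpr hodd)
    have : (8:ℕ) = 2^3 := by norm_num
    rw [this]; exact Nat.Coprime.pow_left 3 h2
  haveI : NeZero (8*nb) := ⟨by positivity⟩
  haveI : NeZero nb := ⟨by omega⟩
  let e := ZMod.chineseRemainder hco
  let a : ZMod (8*nb) := e.symm ((ε : ZMod 8), (-1 : ZMod nb))
  have hunit : IsUnit a := by
    refine IsUnit.of_mul_eq_one a ?_
    show e.symm _ * e.symm _ = 1
    rw [← map_mul]
    have : ((ε : ZMod 8), (-1 : ZMod nb)) * ((ε : ZMod 8), (-1 : ZMod nb))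
        = ((1 : ZMod 8), (1 : ZMod nb)) := by
      rw [Prod.mk_mul_mk, neg_mul_neg, one_mul]
      rcases hε with rfl | rfl <;> norm_num <;> decide
    rw [this]
    exact (show ((1 : ZMod 8), (1 : ZMod nb)) = 1 from rfl) ▸ map_one e.symm
  obtain ⟨p, hgt, hp, hmod⟩ := Nat.forall_exists_prime_gt_and_eq_mod hunit (8*nb)
  refine ⟨p, hp, hgt, ?_, ?_⟩
  · have h1 : e ((p : ZMod (8*nb))) = ((p : ZMod 8), (p : ZMod nb)) := by
      exact map_natCast e.toRingHom p
    have h2 : e a = ((ε : ZMod 8), (-1 : ZMod nb)) := by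
      simp only [a, RingEquiv.apply_symm_apply]
    rw [hmod] at h1
    rw [h2] at h1
    have := (Prod.mk.injEq _ _ _ _).mp h1
    have h8 : (p : ZMod 8) = (ε : ZMod 8) := this.1.symm
    have := (ZMod.natCast_eq_natCast_iff' p ε 8).mp h8
    rcases hε with rfl | rfl <;> omega
  · have h1 : e ((p : ZMod (8*nb))) = ((p : ZMod 8), (p : ZMod nb)) := by
      exact map_natCast e.toRingHom p
    have h2 : e a = ((ε : ZMod 8), (-1 : ZMod nb)) := by
      simp only [a, RingEquiv.apply_symm_apply]
    rw [hmod] at h1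
    rw [h2] at h1
    have hnb : (p : ZMod nb) = -1 := ((Prod.mk.injEq _ _ _ _).mp h1).2.symm
    have : ((p + 1 : ℕ) : ZMod nb) = 0 := by push_cast [hnb]; ring
    exact (ZMod.natCast_eq_zero_iff _ _).mp this

theorem jac_case1 (n p : ℕ) (hn4 : n % 4 = 1) (hp8 : p % 8 = 1) (hdvd : n ∣ p + 1) :
    jacobiSym (-(n:ℤ)) p = 1 := by
  have hpodd : Odd p := Nat.odd_iff.mpr (by omega)
  have hnodd : Odd n := Nat.odd_iff.mpr (by omega)
  have h1 : jacobiSym (-(n:ℤ)) p = jacobiSym (-1) p * jacobiSym (n:ℤ) p := by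
    rw [← jacobiSym.mul_left]; norm_num
  have h2 : jacobiSym (-1) p = 1 := by
    rw [jacobiSym.at_neg_one hpodd]; exact ZMod.χ₄_nat_one_mod_four (by omega)
  have h3 : jacobiSym (n:ℤ) p = jacobiSym (p:ℤ) n :=
    jacobiSym.quadratic_reciprocity_one_mod_four' hnodd (by omega : p % 4 = 1)
  have h4 : jacobiSym (p:ℤ) n = jacobiSym (-1) n := by
    apply jacobiSym.mod_left'
    show (p:ℤ) % n = (-1) % n
    have : (n:ℤ) ∣ (-1) - (p:ℤ) := by
      have : (n:ℤ) ∣ (p:ℤ) + 1 := by exact_mod_cast hdvd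
      have h5 : (-1 : ℤ) - p = -((p:ℤ) + 1) := by ring
      rw [h5]; exact dvd_neg.mpr this
    exact (Int.modEq_iff_dvd.mpr this)
  have h5 : jacobiSym (-1) n = 1 := by
    rw [jacobiSym.at_neg_one hnodd]; exact ZMod.χ₄_nat_one_mod_four hn4
  rw [h1, h2, h3, h4, h5]; ring

theorem jac_case2 (nb p : ℕ) (hnbodd : nb % 2 = 1) (hdvd : nb ∣ p + 1)
    (h : (nb % 4 = 1 ∧ p % 8 = 1) ∨ (nb % 4 = 3 ∧ p % 8 = 3)) :
    jacobiSym (-(2*(nb:ℤ))) p = 1 := by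
  have hp8 : p % 8 = 1 ∨ p % 8 = 3 := by rcases h with ⟨_, h⟩ | ⟨_, h⟩ <;> omega
  have hpodd : Odd p := Nat.odd_iff.mpr (by omega)
  have hnbodd' : Odd nb := Nat.odd_iff.mpr hnbodd
  have h1 : jacobiSym (-(2*(nb:ℤ))) p
      = jacobiSym (-1) p * jacobiSym 2 p * jacobiSym (nb:ℤ) p := by
    rw [← jacobiSym.mul_left, ← jacobiSym.mul_left]; norm_num
  have h4 : jacobiSym (p:ℤ) nb = jacobiSym (-1) nb := by
    apply jacobiSym.mod_left'
    show (p:ℤ) % nb = (-1) % nb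
    have : (nb:ℤ) ∣ (-1) - (p:ℤ) := by
      have : (nb:ℤ) ∣ (p:ℤ) + 1 := by exact_mod_cast hdvd
      have h5 : (-1 : ℤ) - p = -((p:ℤ) + 1) := by ring
      rw [h5]; exact dvd_neg.mpr this
    exact (Int.modEq_iff_dvd.mpr this)
  have h2two : jacobiSym 2 p = ZMod.χ₈ (p : ZMod 8) := jacobiSym.at_two hpodd
  rcases h with ⟨hnb4, hp81⟩ | ⟨hnb4, hp83⟩
  · have h2 : jacobiSym (-1) p = 1 := by
      rw [jacobiSym.at_neg_one hpodd]; exact ZMod.χ₄_nat_one_mod_four (by omega)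
    have h2' : jacobiSym 2 p = 1 := by
      rw [h2two, ZMod.χ₈_nat_mod_eight, hp81]; decide
    have h3 : jacobiSym (nb:ℤ) p = jacobiSym (p:ℤ) nb :=
      jacobiSym.quadratic_reciprocity_one_mod_four' hnbodd' (by omega : p % 4 = 1)
    have h5 : jacobiSym (-1) nb = 1 := by
      rw [jacobiSym.at_neg_one hnbodd']; exact ZMod.χ₄_nat_one_mod_four hnb4
    rw [h1, h2, h2', h3, h4, h5]; ring
  · have h2 : jacobiSym (-1) p = -1 := by
      rw [jacobiSym.at_neg_one hpodd]; exact ZMod.χ₄_nat_three_mod_four (by omega)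
    have h2' : jacobiSym 2 p = -1 := by
      rw [h2two, ZMod.χ₈_nat_mod_eight, hp83]; decide
    have h3 : jacobiSym (nb:ℤ) p = -jacobiSym (p:ℤ) nb :=
      jacobiSym.quadratic_reciprocity_three_mod_four hnb4 (by omega : p % 4 = 3)
    have h5 : jacobiSym (-1) nb = -1 := by
      rw [jacobiSym.at_neg_one hnbodd']; exact ZMod.χ₄_nat_three_mod_four hnb4
    rw [h1, h2, h2', h3, h4, h5]; ring

theorem sf_three_squares (n : ℕ) (hsf : Squarefree n) (h4 : n % 4 = 1 ∨ n % 4 = 2) :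
    ∃ x y z : ℤ, x^2 + y^2 + z^2 = (n:ℤ) := by
  rcases eq_or_ne n 1 with rfl | hn1
  · exact ⟨1, 0, 0, by norm_num⟩
  rcases eq_or_ne n 2 with rfl | hn2
  · exact ⟨1, 1, 0, by norm_num⟩
  have hn5 : 5 ≤ n := by omega
  -- obtain the auxiliary prime together with the Jacobi value
  obtain ⟨p, hp, hpgt, hJ⟩ :
      ∃ p : ℕ, p.Prime ∧ n < p ∧ jacobiSym (-(n:ℤ)) p = 1 ∧ (n:ℤ) ∣ 1 + p ∧ True := by
    rcases h4 with h4 | h4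
    · obtain ⟨p, hp, hgt, hp8, hdvd⟩ := exists_special_prime n (by omega) (by omega) 1 (Or.inl rfl)
      refine ⟨p, hp, by omega, jac_case1 n p h4 hp8 hdvd, ?_, trivial⟩
      have : (n:ℤ) ∣ ((p:ℤ) + 1) := by exact_mod_cast hdvd
      simpa [add_comm] using this
    · have hnb : n = 2 * (n/2) := by omega
      set nb := n / 2 with hnbdef
      have hnbodd : nb % 2 = 1 := by omega
      have hnb3 : 3 ≤ nb := by omega
      have hnb4 : nb % 4 = 1 ∨ nb % 4 = 3 := by omega
      rcases hnb4 with hnb4 | hnb4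
      · obtain ⟨p, hp, hgt, hp8, hdvd⟩ := exists_special_prime nb hnbodd hnb3 1 (Or.inl rfl)
        have hpodd : p % 2 = 1 := by omega
        have hdvd2 : n ∣ p + 1 := by
          rw [hnb]
          refine Nat.Coprime.mul_dvd_of_dvd_of_dvd ?_ ⟨(p+1)/2, by omega⟩ hdvd
          exact Nat.coprime_two_left.mpr (Nat.odd_iff.mpr hnbodd)
        refine ⟨p, hp, by omega, ?_, ?_, trivial⟩
        · have := jac_case2 nb p hnbodd hdvd (Or.inl ⟨hnb4, hp8⟩)
          convert this using 2
          push_cast [hnb]; ring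
        · have : (n:ℤ) ∣ ((p:ℤ) + 1) := by exact_mod_cast hdvd2
          simpa [add_comm] using this
      · obtain ⟨p, hp, hgt, hp8, hdvd⟩ := exists_special_prime nb hnbodd hnb3 3 (Or.inr rfl)
        have hpodd : p % 2 = 1 := by omega
        have hdvd2 : n ∣ p + 1 := by
          rw [hnb]
          refine Nat.Coprime.mul_dvd_of_dvd_of_dvd ?_ ⟨(p+1)/2, by omega⟩ hdvd
          exact Nat.coprime_two_left.mpr (Nat.odd_iff.mpr hnbodd)
        refine ⟨p, hp, by omega, ?_, ?_, trivial⟩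
        · have := jac_case2 nb p hnbodd hdvd (Or.inr ⟨hnb4, hp8⟩)
          convert this using 2
          push_cast [hnb]; ring
        · have : (n:ℤ) ∣ ((p:ℤ) + 1) := by exact_mod_cast hdvd2
          simpa [add_comm] using this
  obtain ⟨hJ, hdvd, -⟩ := hJ
  -- square root of -n mod p
  haveI : Fact p.Prime := ⟨hp⟩
  have hsq : IsSquare ((-(n:ℤ) : ℤ) : ZMod p) := ZMod.isSquare_of_jacobiSym_eq_one hJ
  obtain ⟨u, hu⟩ := hsq
  haveI : NeZero p := ⟨hp.pos.ne'⟩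
  set C : ℤ := (u.val : ℤ) with hCdef
  have hC : (p:ℤ) ∣ C^2 + n := by
    have hC' : ((C : ℤ) : ZMod p) = u := by
      rw [hCdef]
      exact_mod_cast ZMod.natCast_rightInverse u
    have h0 : ((C^2 + (n:ℤ) : ℤ) : ZMod p) = 0 := by
      push_cast
      rw [hC']
      push_cast at hu
      linear_combination -hu
    exact (ZMod.intCast_zmod_eq_zero_iff_dvd _ _).mp h0
  set N := (n : ℤ) with hNdef
  set P := (p : ℤ) with hPdef
  have hN : 0 < N := by positivity -- n ≥ 5
  have hN0 : (5:ℤ) ≤ N := by rw [hNdef]; exact_mod_cast hn5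
  have hP : 0 < P := by rw [hPdef]; exact_mod_cast hp.pos
  obtain ⟨k, hk⟩ := hdvd  -- 1 + P = N * k
  obtain ⟨cc, hcc⟩ := hC  -- C^2 + N = P * cc
  have hwdvd : P ∣ k*C^2 + 1 := by
    have h2 : N*(k*C^2+1) = P*(cc + C^2) := by linear_combination C^2*hk.symm + hcc
    have pp : Prime P := Nat.prime_iff_prime_int.mp hp
    rcases (pp.dvd_mul.mp ⟨cc + C^2, h2.symm ▸ by ring⟩ : P ∣ N ∨ P ∣ (k*C^2+1)) with hd | hd
    · exfalso
      rw [hNdef, hPdef] at hd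
      have : (p:ℕ) ∣ n := by exact_mod_cast hd
      have := Nat.le_of_dvd (by omega) this
      omega
    · exact hd
  obtain ⟨w, hww⟩ := hwdvd  -- k*C^2 + 1 = P * w
  have hiden : ∀ x y z : ℤ, N*P*(Q3 N k w 1 C 0 x y z)
      = P*(N*x + y + C*z)^2 + (P*y - C*z)^2 + N*z^2 := by
    intro x y z
    simp only [Q3]
    linear_combination -(P*y^2 + C^2*z^2)*hk - (N*z^2)*hww
  have hQpos : ∀ x y z : ℤ, ¬(x = 0 ∧ y = 0 ∧ z = 0) → 0 < Q3 N k w 1 C 0 x y z := by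
    intro x y z hxyz
    by_contra hq
    push_neg at hq
    have e := hiden x y z
    have s1 : 0 ≤ P*(N*x + y + C*z)^2 := by positivity
    have s2 : 0 ≤ (P*y - C*z)^2 := sq_nonneg _
    have s3 : 0 ≤ N*z^2 := by positivity
    have hle : N*P*(Q3 N k w 1 C 0 x y z) ≤ 0 :=
      mul_nonpos_of_nonneg_of_nonpos (by positivity) hq
    have z3 : N*z^2 = 0 := by linarith
    have hz : z = 0 := by
      have := (mul_eq_zero.mp z3).resolve_left (by linarith)
      exact pow_eq_zero_iff (by norm_num) |>.mp this
    subst hz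
    have z2 : (P*y - C*0)^2 = 0 := by linarith
    have hy : y = 0 := by
      have h' : P*y - C*0 = 0 := by
        have := pow_eq_zero_iff (n := 2) (by norm_num) |>.mp z2
        exact this
      have : P*y = 0 := by linarith
      rcases mul_eq_zero.mp this with h | h
      · exact absurd h (by linarith)
      · exact h
    subst hy
    have z1 : P*(N*x + 0 + C*0)^2 = 0 := by linarith
    have hx : x = 0 := by
      have h' := (mul_eq_zero.mp z1).resolve_left (by linarith)
      have h'' : N*x + 0 + C*0 = 0 := pow_eq_zero_iff (n := 2) (by norm_num) |>.mp h'
      have : N*x = 0 := by linarith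
      rcases mul_eq_zero.mp this with h | h
      · exact absurd h (by linarith)
      · exact h
    exact hxyz ⟨hx, rfl, rfl⟩
  have hdet : D3 N k w 1 C 0 = 1 := by
    simp only [D3]
    linear_combination -w*hk - hww
  have := ternary_rep N k w 1 C 0 hQpos hdet N ⟨1, 0, 0, by simp only [Q3]; ring⟩
  exact this

theorem sum_three_squares (n : ℕ) (h4 : n % 4 = 1 ∨ n % 4 = 2) :
    ∃ x y z : ℤ, x^2 + y^2 + z^2 = (n:ℤ) := by
  obtain ⟨m, d, hmd, hsf⟩ := Nat.sq_mul_squarefree n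
  have hd1 : d % 2 = 1 := by
    rcases Nat.even_or_odd d with ⟨e, he⟩ | ho
    · exfalso
      obtain ⟨G, hG⟩ : ∃ G, n = 4*G := ⟨e*e*m, by rw [← hmd, he]; ring⟩
      omega
    · exact Nat.odd_iff.mp ho
  obtain ⟨e, he⟩ : ∃ e, d = 2*e + 1 := ⟨d/2, by omega⟩
  have hm4 : m % 4 = n % 4 := by
    obtain ⟨G, hG⟩ : ∃ G, n = 4*G + m := ⟨(e*e+e)*m, by rw [← hmd, he]; ring⟩
    omega
  obtain ⟨x, y, z, hxyz⟩ := sf_three_squares m hsf (by omega)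
  refine ⟨d*x, d*y, d*z, ?_⟩
  have hmd' : ((d:ℤ))^2 * (m:ℤ) = (n:ℤ) := by exact_mod_cast hmd
  push_cast
  linear_combination ((d:ℤ))^2 * hxyz + hmd'


open Matrix

/-- nonneg three squares for integers -/
theorem S3 (m : ℤ) (hm0 : 0 ≤ m) (hm : m % 4 = 1 ∨ m % 4 = 2) :
    ∃ x y z : ℤ, 0 ≤ x ∧ 0 ≤ y ∧ 0 ≤ z ∧ x^2 + y^2 + z^2 = m := by
  obtain ⟨n, rfl⟩ : ∃ n : ℕ, m = (n : ℤ) := ⟨m.toNat, (Int.toNat_of_nonneg hm0).symm⟩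
  have hn : n % 4 = 1 ∨ n % 4 = 2 := by omega
  obtain ⟨x, y, z, h⟩ := sum_three_squares n hn
  exact ⟨|x|, |y|, |z|, abs_nonneg x, abs_nonneg y, abs_nonneg z, by
    rw [sq_abs, sq_abs, sq_abs]; exact h⟩

theorem S4 (m : ℤ) (hm0 : 0 ≤ m) :
    ∃ x y z w : ℤ, 0 ≤ x ∧ 0 ≤ y ∧ 0 ≤ z ∧ 0 ≤ w ∧ x^2 + y^2 + z^2 + w^2 = m := by
  obtain ⟨n, rfl⟩ : ∃ n : ℕ, m = (n : ℤ) := ⟨m.toNat, (Int.toNat_of_nonneg hm0).symm⟩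
  obtain ⟨x, y, z, w, h⟩ := Nat.sum_four_squares n
  exact ⟨x, y, z, w, by positivity, by positivity, by positivity, by positivity, by
    exact_mod_cast congrArg (Nat.cast : ℕ → ℤ) h⟩

theorem mem8 (a c : ℤ) (V : Matrix (Fin 2) (Fin 8) ℤ) (h1 : ∀ i j, 0 ≤ V i j)
    (h2 : !![a, 2; 2, c] = V * Vᵀ) : intCpRank !![a, 2; 2, c] ≤ 8 :=
  Nat.sInf_le ⟨V, h1, h2⟩


theorem VVT (f0 f1 f2 f3 f4 f5 f6 f7 g0 g1 g2 g3 g4 g5 g6 g7 : ℤ) :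
    (!![f0,f1,f2,f3,f4,f5,f6,f7; g0,g1,g2,g3,g4,g5,g6,g7] : Matrix (Fin 2) (Fin 8) ℤ) *
      (!![f0,f1,f2,f3,f4,f5,f6,f7; g0,g1,g2,g3,g4,g5,g6,g7] : Matrix (Fin 2) (Fin 8) ℤ)ᵀ
    = !![f0^2+f1^2+f2^2+f3^2+f4^2+f5^2+f6^2+f7^2,
         f0*g0+f1*g1+f2*g2+f3*g3+f4*g4+f5*g5+f6*g6+f7*g7;
         f0*g0+f1*g1+f2*g2+f3*g3+f4*g4+f5*g5+f6*g6+f7*g7,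
         g0^2+g1^2+g2^2+g3^2+g4^2+g5^2+g6^2+g7^2] := by
  ext i j
  fin_cases i <;> fin_cases j <;>
    (simp [Matrix.mul_apply, Matrix.transpose_apply, Fin.sum_univ_succ, Matrix.vecHead,
      Matrix.vecTail]; ring)

theorem cp_rank_le_eight' (a c : ℤ) (ha : 2 ≤ a) (hac : a ≤ c) :
    intCpRank !![a, 2; 2, c] ≤ 8 := by
  rcases (by omega : a % 4 = 0 ∨ a % 4 = 1 ∨ a % 4 = 2 ∨ a % 4 = 3) with h | h | h | h
  · -- a ≡ 0 mod 4, a ≥ 4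
    have ha4 : 4 ≤ a := by omega
    rcases (by omega : c % 4 = 0 ∨ c % 4 = 1 ∨ c % 4 = 2 ∨ c % 4 = 3) with hc | hc | hc | hc
    · -- both S3 case
      obtain ⟨x, y, z, hx0, hy0, hz0, hx⟩ := S3 (a-2) (by omega) (by omega)
      obtain ⟨u, v, w, hu0, hv0, hw0, hu⟩ := S3 (c-2) (by omega) (by omega)
      refine mem8 a c !![1,1,x,y,z,0,0,0; 1,1,0,0,0,u,v,w] ?_ ?_
      · intro i j; fin_cases i <;> fin_cases j <;> (norm_num; try assumption)
      · rw [VVT]; ext i j; fin_cases i <;> fin_cases j <;> (norm_num; try linarith)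
    · -- c ≡ 1 : S4(a-1) top, S3(c-4) bottom, cross (1,2)
      obtain ⟨x, y, z, q, hx0, hy0, hz0, hq0, hx⟩ := S4 (a-1) (by omega)
      obtain ⟨u, v, w, hu0, hv0, hw0, hu⟩ := S3 (c-4) (by omega) (by omega)
      refine mem8 a c !![1,x,y,z,q,0,0,0; 2,0,0,0,0,u,v,w] ?_ ?_
      · intro i j; fin_cases i <;> fin_cases j <;> (norm_num; try assumption)
      · rw [VVT]; ext i j; fin_cases i <;> fin_cases j <;> (norm_num; try linarith)
    · -- c ≡ 2 : S4(a-4) top, S3(c-1) bottom, cross (2,1)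
      obtain ⟨x, y, z, q, hx0, hy0, hz0, hq0, hx⟩ := S4 (a-4) (by omega)
      obtain ⟨u, v, w, hu0, hv0, hw0, hu⟩ := S3 (c-1) (by omega) (by omega)
      refine mem8 a c !![2,x,y,z,q,0,0,0; 1,0,0,0,0,u,v,w] ?_ ?_
      · intro i j; fin_cases i <;> fin_cases j <;> (norm_num; try assumption)
      · rw [VVT]; ext i j; fin_cases i <;> fin_cases j <;> (norm_num; try linarith)
    · -- c ≡ 3 : both S3
      obtain ⟨x, y, z, hx0, hy0, hz0, hx⟩ := S3 (a-2) (by omega) (by omega)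
      obtain ⟨u, v, w, hu0, hv0, hw0, hu⟩ := S3 (c-2) (by omega) (by omega)
      refine mem8 a c !![1,1,x,y,z,0,0,0; 1,1,0,0,0,u,v,w] ?_ ?_
      · intro i j; fin_cases i <;> fin_cases j <;> (norm_num; try assumption)
      · rw [VVT]; ext i j; fin_cases i <;> fin_cases j <;> (norm_num; try linarith)
  · -- a ≡ 1 mod 4, a ≥ 5 : S3(a-4) top, S4(c-1) bottom, cross (2,1)
    obtain ⟨x, y, z, hx0, hy0, hz0, hx⟩ := S3 (a-4) (by omega) (by omega)
    obtain ⟨u, v, w, q, hu0, hv0, hw0, hq0, hu⟩ := S4 (c-1) (by omega)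
    refine mem8 a c !![2,x,y,z,0,0,0,0; 1,0,0,0,u,v,w,q] ?_ ?_
    · intro i j; fin_cases i <;> fin_cases j <;> (norm_num; try assumption)
    · rw [VVT]; ext i j; fin_cases i <;> fin_cases j <;> (norm_num; try linarith)
  · -- a ≡ 2 mod 4
    rcases lt_or_ge c 4 with hc4 | hc4
    · -- a = 2, c ∈ {2,3}
      have ha2 : a = 2 := by omega
      rcases (by omega : c = 2 ∨ c = 3) with rfl | rfl
      · subst ha2
        refine mem8 2 2 !![1,1,0,0,0,0,0,0; 1,1,0,0,0,0,0,0] ?_ ?_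
        · intro i j; fin_cases i <;> fin_cases j <;> norm_num
        · rw [VVT]; norm_num
      · subst ha2
        refine mem8 2 3 !![1,1,0,0,0,0,0,0; 1,1,1,0,0,0,0,0] ?_ ?_
        · intro i j; fin_cases i <;> fin_cases j <;> norm_num
        · rw [VVT]; norm_num
    · -- S3(a-1) top, S4(c-4) bottom, cross (1,2)
      obtain ⟨x, y, z, hx0, hy0, hz0, hx⟩ := S3 (a-1) (by omega) (by omega)
      obtain ⟨u, v, w, q, hu0, hv0, hw0, hq0, hu⟩ := S4 (c-4) (by omega)
      refine mem8 a c !![1,x,y,z,0,0,0,0; 2,0,0,0,u,v,w,q] ?_ ?_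
      · intro i j; fin_cases i <;> fin_cases j <;> (norm_num; try assumption)
      · rw [VVT]; ext i j; fin_cases i <;> fin_cases j <;> (norm_num; try linarith)
  · -- a ≡ 3 mod 4
    rcases lt_or_ge c 4 with hc4 | hc4
    · have ha3 : a = 3 ∧ c = 3 := by omega
      obtain ⟨rfl, rfl⟩ := ha3
      refine mem8 3 3 !![1,1,1,0,0,0,0,0; 1,1,0,1,0,0,0,0] ?_ ?_
      · intro i j; fin_cases i <;> fin_cases j <;> norm_num
      · rw [VVT]; norm_num
    · obtain ⟨x, y, z, hx0, hy0, hz0, hx⟩ := S3 (a-1) (by omega) (by omega)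
      obtain ⟨u, v, w, q, hu0, hv0, hw0, hq0, hu⟩ := S4 (c-4) (by omega)
      refine mem8 a c !![1,x,y,z,0,0,0,0; 2,0,0,0,u,v,w,q] ?_ ?_
      · intro i j; fin_cases i <;> fin_cases j <;> (norm_num; try assumption)
      · rw [VVT]; ext i j; fin_cases i <;> fin_cases j <;> (norm_num; try linarith)

theorem cp_rank_le_eight (a c : ℤ) (ha : 2 ≤ a) (hac : a ≤ c) (hdet : 4 ≤ a * c) :
    intCpRank !![a, 2; 2, c] ≤ 8 :=
  cp_rank_le_eight' a c ha hac
end
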